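/- arXiv:2604.06686 — 4 statements merged into one kernel-verified Lean document; each statement's English description precedes it below -/
import Mathlib

section
/- Let X be a quasi-median graph, S a sector delimited by a hyperplane J, and Y₁, …, Yₙ pairwise intersecting gated subgraphs of X. If the intersection Y₁ ∩ ⋯ ∩ Yₙ is contained in S, then Yᵢ ⊆ S for some i. -/
open SimpleGraph

variable {V : Type*}

/-- Triangle condition of weak modularity. -/
def TriangleCond (X : SimpleGraph V) : Prop :=
  ∀ o x y : V, X.Adj x y → X.dist o x = X.dist o y →
    ∃ w : V, X.Adj w x ∧ X.Adj w y ∧ X.dist o w + 1 = X.dist o x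

/-- Quadrangle condition of weak modularity. -/
def QuadCond (X : SimpleGraph V) : Prop :=
  ∀ o x y z : V, X.Adj z x → X.Adj z y → X.dist x y = 2 →
    X.dist o z = X.dist o x + 1 → X.dist o z = X.dist o y + 1 →
    ∃ w : V, X.Adj w x ∧ X.Adj w y ∧ X.dist o w + 2 = X.dist o z

/-- No induced copy of the complete bipartite graph `K_{2,3}`. -/
def NoInducedK23 (X : SimpleGraph V) : Prop :=
  ¬ ∃ a b x y z : V, a ≠ b ∧ x ≠ y ∧ y ≠ z ∧ x ≠ z ∧
    X.Adj a x ∧ X.Adj a y ∧ X.Adj a z ∧ X.Adj b x ∧ X.Adj b y ∧ X.Adj b z ∧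
    ¬ X.Adj a b ∧ ¬ X.Adj x y ∧ ¬ X.Adj y z ∧ ¬ X.Adj x z

/-- No induced copy of `K₄` minus an edge. -/
def NoInducedK4minus (X : SimpleGraph V) : Prop :=
  ¬ ∃ a b c d : V, X.Adj a b ∧ X.Adj a c ∧ X.Adj a d ∧ X.Adj b c ∧ X.Adj b d ∧
    c ≠ d ∧ ¬ X.Adj c d

/-- A quasi-median graph: a connected weakly modular graph with no induced
`K_{2,3}` and no induced `K₄⁻`. -/
def QuasiMedian (X : SimpleGraph V) : Prop :=
  X.Connected ∧ TriangleCond X ∧ QuadCond X ∧ NoInducedK23 X ∧ NoInducedK4minus X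

/-- `m` lies on a geodesic from `a` to `b`. -/
def InInterval (X : SimpleGraph V) (a m b : V) : Prop :=
  X.dist a m + X.dist m b = X.dist a b

/-- `m` is a median of the triple `a, b, c`. -/
def IsMedianOf (X : SimpleGraph V) (m a b c : V) : Prop :=
  InInterval X a m b ∧ InInterval X b m c ∧ InInterval X a m c

/-- A median graph: connected, and every triple of vertices has a unique median. -/
def MedianGraph (X : SimpleGraph V) : Prop :=
  X.Connected ∧ ∀ a b c : V, ∃! m : V, IsMedianOf X m a b c

/-- The elementary relation on edges generating hyperplanes: two edges of a common
triangle, or opposite edges of an induced 4-cycle. -/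
def EdgeRel (X : SimpleGraph V) (e f : Sym2 V) : Prop :=
  (∃ a b c : V, X.Adj a b ∧ X.Adj b c ∧ X.Adj a c ∧ e = s(a, b) ∧ f = s(b, c)) ∨
  (∃ a b c d : V, X.Adj a b ∧ X.Adj b c ∧ X.Adj c d ∧ X.Adj d a ∧
    a ≠ c ∧ ¬ X.Adj a c ∧ b ≠ d ∧ ¬ X.Adj b d ∧ e = s(a, b) ∧ f = s(c, d))

/-- A hyperplane: an equivalence class of edges under the reflexive-transitive
closure of `EdgeRel`. -/
def IsHyperplane (X : SimpleGraph V) (J : Set (Sym2 V)) : Prop :=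
  ∃ e ∈ X.edgeSet, J = {f | Relation.ReflTransGen (EdgeRel X) e f}

/-- The hyperplane `J` separates `x` and `y`. -/
def SeparatesPts (X : SimpleGraph V) (J : Set (Sym2 V)) (x y : V) : Prop :=
  ¬ (X.deleteEdges J).Reachable x y

/-- A sector delimited by `J`: a connected component of `X` minus the edges of `J`. -/
def IsSectorOf (X : SimpleGraph V) (J : Set (Sym2 V)) (S : Set V) : Prop :=
  ∃ v : V, S = {w | (X.deleteEdges J).Reachable v w}

/-- A gated subset of vertices. -/
def IsGated (X : SimpleGraph V) (Y : Set V) : Prop :=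
  Y.Nonempty ∧ ∀ x : V, ∃ y ∈ Y, ∀ z ∈ Y, X.dist x z = X.dist x y + X.dist y z

/-- The gated hull of a set of vertices. -/
def GatedHull (X : SimpleGraph V) (A : Set V) : Set V :=
  ⋂₀ {Y : Set V | IsGated X Y ∧ A ⊆ Y}

/-- A polytope: the gated hull of a non-empty finite set of vertices. -/
def IsPolytope (X : SimpleGraph V) (P : Set V) : Prop :=
  ∃ A : Finset V, A.Nonempty ∧ P = GatedHull X (A : Set V)

/-- `HypOf X Y`: the hyperplanes separating two vertices of `Y` (the hyperplanes
crossing `Y`). -/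
def HypOf (X : SimpleGraph V) (Y : Set V) : Set (Set (Sym2 V)) :=
  {J | IsHyperplane X J ∧ ∃ a ∈ Y, ∃ b ∈ Y, SeparatesPts X J a b}

/-- The hyperplanes separating `A` from `B` (placing them in two distinct sectors). -/
def SepHyp (X : SimpleGraph V) (A B : Set V) : Set (Set (Sym2 V)) :=
  {J | IsHyperplane X J ∧ ∃ S T : Set V, IsSectorOf X J S ∧ IsSectorOf X J T ∧
    S ≠ T ∧ A ⊆ S ∧ B ⊆ T}

/-- The covering relation for polytopes: `P ⊊ Q` with no polytope strictly between. -/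
def PolyCover (X : SimpleGraph V) (P Q : Set V) : Prop :=
  IsPolytope X P ∧ IsPolytope X Q ∧ P ⊂ Q ∧
    ¬ ∃ R : Set V, IsPolytope X R ∧ P ⊂ R ∧ R ⊂ Q

abbrev PolyVert (X : SimpleGraph V) := {P : Set V // IsPolytope X P}

/-- The graph of polytopes: the covering graph of the inclusion poset of polytopes. -/
def PolyGraph (X : SimpleGraph V) : SimpleGraph (PolyVert X) where
  Adj P Q := PolyCover X P.val Q.val ∨ PolyCover X Q.val P.val
  symm := by constructor; intro P Q h; exact h.symm
  loopless := by constructor; intro P h; rcases h with h | h <;> exact (ssubset_irrefl P.val) h.2.2.1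

/-- Two hyperplanes are transverse: there is an induced 4-cycle whose two pairs of
opposite edges belong respectively to the two hyperplanes. -/
def Transverse (X : SimpleGraph V) (J₁ J₂ : Set (Sym2 V)) : Prop :=
  ∃ a b c d : V, X.Adj a b ∧ X.Adj b c ∧ X.Adj c d ∧ X.Adj d a ∧
    a ≠ c ∧ ¬ X.Adj a c ∧ b ≠ d ∧ ¬ X.Adj b d ∧
    s(a, b) ∈ J₁ ∧ s(c, d) ∈ J₁ ∧ s(b, c) ∈ J₂ ∧ s(d, a) ∈ J₂

/-- A prism: a polytope whose crossing hyperplanes are pairwise transverse (this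
characterises the gated subgraphs decomposing as finite products of cliques). -/
def IsPrism (X : SimpleGraph V) (P : Set V) : Prop :=
  IsPolytope X P ∧ ∀ J₁ ∈ HypOf X P, ∀ J₂ ∈ HypOf X P, J₁ ≠ J₂ → Transverse X J₁ J₂

/-- The covering relation for prisms. -/
def PrismCover (X : SimpleGraph V) (P Q : Set V) : Prop :=
  IsPrism X P ∧ IsPrism X Q ∧ P ⊂ Q ∧
    ¬ ∃ R : Set V, IsPrism X R ∧ P ⊂ R ∧ R ⊂ Q

abbrev PrismVert (X : SimpleGraph V) := {P : Set V // IsPrism X P}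

/-- The graph of prisms. -/
def PrismGraph (X : SimpleGraph V) : SimpleGraph (PrismVert X) where
  Adj P Q := PrismCover X P.val Q.val ∨ PrismCover X Q.val P.val
  symm := by constructor; intro P Q h; exact h.symm
  loopless := by constructor; intro P h; rcases h with h | h <;> exact (ssubset_irrefl P.val) h.2.2.1

/-- A convex set of vertices: closed under taking points on geodesics. -/
def IsConvexSet (X : SimpleGraph V) (Y : Set V) : Prop :=
  ∀ a ∈ Y, ∀ b ∈ Y, ∀ m : V, InInterval X a m b → m ∈ Y

/-- The convex hull of a set of vertices. -/
def ConvHull (X : SimpleGraph V) (A : Set V) : Set V :=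
  ⋂₀ {Y : Set V | IsConvexSet X Y ∧ A ⊆ Y}

/-- The subgraph of `X` induced on `Y` (kept on the same vertex set). -/
def RestrictTo (X : SimpleGraph V) (Y : Set V) : SimpleGraph V where
  Adj a b := X.Adj a b ∧ a ∈ Y ∧ b ∈ Y
  symm := by constructor; intro a b h; exact ⟨h.1.symm, h.2.2, h.2.1⟩
  loopless := by constructor; intro a h; exact X.irrefl h.1

namespace QMAux

open SimpleGraph Relation

variable {V : Type*} {X : SimpleGraph V}

/-! ### Basic distance utilities -/

lemma dcomm (X : SimpleGraph V) (a b : V) : X.dist a b = X.dist b a :=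
  SimpleGraph.dist_comm

lemma dist_eq_zero (hc : X.Connected) {a b : V} (h : X.dist a b = 0) : a = b :=
  (hc.dist_eq_zero_iff).1 h

lemma adj_dist {a b : V} (h : X.Adj a b) : X.dist a b = 1 :=
  dist_eq_one_iff_adj.2 h

lemma tri (hc : X.Connected) (a b c : V) : X.dist a c ≤ X.dist a b + X.dist b c :=
  hc.dist_triangle

lemma dist_two (hc : X.Connected) {a b c : V} (hne : a ≠ c) (hnadj : ¬ X.Adj a c)
    (h1 : X.Adj a b) (h2 : X.Adj b c) : X.dist a c = 2 := by
  have hle : X.dist a c ≤ 2 := by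
    have := tri hc a b c
    rw [adj_dist h1, adj_dist h2] at this
    omega
  have h0 : X.dist a c ≠ 0 := fun h => hne (dist_eq_zero hc h)
  have h1' : X.dist a c ≠ 1 := fun h => hnadj (dist_eq_one_iff_adj.1 h)
  omega

lemma exists_nbr (hc : X.Connected) {a t : V} {k : ℕ} (h : X.dist a t = k + 1) :
    ∃ b, X.Adj a b ∧ X.dist b t = k := by
  obtain ⟨p, hp⟩ := (hc a t).exists_walk_length_eq_dist
  rw [h] at hp
  cases p with
  | nil => simp at hp
  | @cons _ v _ hadj q =>
    refine ⟨v, hadj, ?_⟩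
    have hq : X.dist v t ≤ k := by
      have := SimpleGraph.dist_le q
      simp only [Walk.length_cons] at hp
      omega
    have : X.dist a t ≤ 1 + X.dist v t := by
      have := tri hc a v t
      rw [adj_dist hadj] at this; omega
    omega

/-! ### Gated and convex sets: Helly -/

lemma gated_convex (hc : X.Connected) {Y : Set V} (hY : IsGated X Y) : IsConvexSet X Y := by
  intro a ha b hb m hm
  obtain ⟨g, hg, hgd⟩ := hY.2 m
  have h1 := hgd a ha
  have h2 := hgd b hb
  have ht : X.dist a b ≤ X.dist g a + X.dist g b := by
    have := tri hc a g b
    rw [dcomm X a g] at this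
    omega
  unfold InInterval at hm
  rw [dcomm X a m] at hm
  have hz : X.dist m g = 0 := by omega
  have := dist_eq_zero hc hz
  rwa [this]

lemma helly3 (hc : X.Connected) {A B C : Set V} (hA : IsGated X A)
    (hB : IsConvexSet X B) (hC : IsConvexSet X C)
    (hAB : (A ∩ B).Nonempty) (hAC : (A ∩ C).Nonempty) (hBC : (B ∩ C).Nonempty) :
    ∃ z, z ∈ A ∧ z ∈ B ∧ z ∈ C := by
  obtain ⟨x, hxB, hxC⟩ := hBC
  obtain ⟨a, haA, had⟩ := hA.2 x
  obtain ⟨b₀, hb₀A, hb₀B⟩ := hAB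
  obtain ⟨c₀, hc₀A, hc₀C⟩ := hAC
  have hB' : a ∈ B := hB x hxB b₀ hb₀B a (by rw [InInterval, (had b₀ hb₀A)])
  have hC' : a ∈ C := hC x hxC c₀ hc₀C a (by rw [InInterval, (had c₀ hc₀A)])
  exact ⟨a, haA, hB', hC'⟩

lemma gated_inter (hc : X.Connected) {A B : Set V} (hA : IsGated X A) (hB : IsGated X B)
    (hne : (A ∩ B).Nonempty) : IsGated X (A ∩ B) := by
  refine ⟨hne, fun x => ?_⟩
  obtain ⟨a, haA, had⟩ := hA.2 x
  obtain ⟨b, hbB, hbd⟩ := hB.2 a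
  obtain ⟨c, hcA, hcB⟩ := hne
  have hbA : b ∈ A := (gated_convex hc hA) a haA c hcA b (by rw [InInterval, hbd c hcB])
  refine ⟨b, ⟨hbA, hbB⟩, fun z hz => ?_⟩
  have h1 := had z hz.1
  have h2 := hbd z hz.2
  have h3 := had b hbA
  rw [h1, h2, h3]
  ring

lemma hellyN (hc : X.Connected) :
    ∀ n (Y : Fin (n + 1) → Set V), (∀ i, IsGated X (Y i)) →
    (∀ i j, (Y i ∩ Y j).Nonempty) → ∀ C : Set V, IsConvexSet X C →
    (∀ i, (Y i ∩ C).Nonempty) → ((⋂ i, Y i) ∩ C).Nonempty := by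
  intro n
  induction n with
  | zero =>
    intro Y hg hp C hC hYC
    obtain ⟨x, hx1, hx2⟩ := hYC 0
    exact ⟨x, Set.mem_iInter.2 fun i => by rwa [Fin.eq_zero i], hx2⟩
  | succ n ih =>
    intro Y hg hp C hC hYC
    set Z : Fin (n + 1) → Set V := fun i => Y i.castSucc ∩ Y (Fin.last (n + 1)) with hZ
    have hZg : ∀ i, IsGated X (Z i) := fun i =>
      gated_inter hc (hg _) (hg _) (hp _ _)
    have hZp : ∀ i j, (Z i ∩ Z j).Nonempty := by
      intro i j
      obtain ⟨z, h1, h2, h3⟩ := helly3 hc (hg (Fin.last (n+1)))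
        (gated_convex hc (hg i.castSucc)) (gated_convex hc (hg j.castSucc))
        (by rw [Set.inter_comm]; exact hp _ _) (by rw [Set.inter_comm]; exact hp _ _)
        (hp _ _)
      exact ⟨z, ⟨h2, h1⟩, ⟨h3, h1⟩⟩
    have hZC : ∀ i, (Z i ∩ C).Nonempty := by
      intro i
      obtain ⟨z, h1, h2, h3⟩ := helly3 hc (hg (Fin.last (n+1)))
        (gated_convex hc (hg i.castSucc)) hC
        (by rw [Set.inter_comm]; exact hp _ _) (hYC _)
        (hYC i.castSucc |>.imp fun x hx => ⟨hx.1, hx.2⟩ |> fun h => h)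
      exact ⟨z, ⟨h2, h1⟩, h3⟩
    obtain ⟨x, hx1, hx2⟩ := ih Z hZg hZp C hC hZC
    refine ⟨x, Set.mem_iInter.2 fun j => ?_, hx2⟩
    refine Fin.lastCases ?_ ?_ j
    · exact (Set.mem_iInter.1 hx1 0).2
    · intro i; exact (Set.mem_iInter.1 hx1 i).1

/-! ### Cliques and gates -/

lemma tri_adj (hc : X.Connected) {a b : V} (h : X.Adj a b) (c : V) :
    X.dist a c ≤ 1 + X.dist b c := by
  have := tri hc a b c; rw [adj_dist h] at this; omega

lemma k4h (hX : QuasiMedian X) {a b c d : V} (hab : X.Adj a b) (hac : X.Adj a c)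
    (had : X.Adj a d) (hbc : X.Adj b c) (hbd : X.Adj b d) (hcd : c ≠ d) : X.Adj c d := by
  by_contra hno
  exact hX.2.2.2.2 ⟨a, b, c, d, hab, hac, had, hbc, hbd, hcd, hno⟩

lemma k23h (hX : QuasiMedian X) {a b x y z : V} (hab : a ≠ b) (hxy : x ≠ y) (hyz : y ≠ z)
    (hxz : x ≠ z) (h1 : X.Adj a x) (h2 : X.Adj a y) (h3 : X.Adj a z) (h4 : X.Adj b x)
    (h5 : X.Adj b y) (h6 : X.Adj b z) (n1 : ¬ X.Adj a b) (n2 : ¬ X.Adj x y)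
    (n3 : ¬ X.Adj y z) (n4 : ¬ X.Adj x z) : False :=
  hX.2.2.2.1 ⟨a, b, x, y, z, hab, hxy, hyz, hxz, h1, h2, h3, h4, h5, h6, n1, n2, n3, n4⟩

def cliq (X : SimpleGraph V) (u₁ u₂ : V) : Set V :=
  {u₁, u₂} ∪ {w | X.Adj w u₁ ∧ X.Adj w u₂}

lemma cliq_mem₁ {u₁ u₂ : V} : u₁ ∈ cliq X u₁ u₂ := Or.inl (Or.inl rfl)

lemma cliq_mem₂ {u₁ u₂ : V} : u₂ ∈ cliq X u₁ u₂ := Or.inl (Or.inr rfl)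

lemma cliq_cases {u₁ u₂ w : V} (hw : w ∈ cliq X u₁ u₂) :
    w = u₁ ∨ w = u₂ ∨ (X.Adj w u₁ ∧ X.Adj w u₂) := by
  rcases hw with (h | h) | h
  · exact Or.inl h
  · exact Or.inr (Or.inl h)
  · exact Or.inr (Or.inr h)

lemma cliq_adj (hX : QuasiMedian X) {u₁ u₂ : V} (h12 : X.Adj u₁ u₂) :
    ∀ z₁ ∈ cliq X u₁ u₂, ∀ z₂ ∈ cliq X u₁ u₂, z₁ ≠ z₂ → X.Adj z₁ z₂ := by
  intro z₁ hz₁ z₂ hz₂ hne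
  rcases cliq_cases hz₁ with h1 | h1 | h1 <;> rcases cliq_cases hz₂ with h2 | h2 | h2
  · exact absurd (h1.trans h2.symm) hne
  · rw [h1, h2]; exact h12
  · rw [h1]; exact h2.1.symm
  · rw [h1, h2]; exact h12.symm
  · exact absurd (h1.trans h2.symm) hne
  · rw [h1]; exact h2.2.symm
  · rw [h2]; exact h1.1
  · rw [h2]; exact h1.2
  · exact k4h hX h12 h1.1.symm h2.1.symm h1.2.symm h2.2.symm hne

lemma cliq_closed (hX : QuasiMedian X) {u₁ u₂ : V} (h12 : X.Adj u₁ u₂) :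
    ∀ z₁ ∈ cliq X u₁ u₂, ∀ z₂ ∈ cliq X u₁ u₂, z₁ ≠ z₂ →
      ∀ w, X.Adj w z₁ → X.Adj w z₂ → w ∈ cliq X u₁ u₂ := by
  intro z₁ hz₁ z₂ hz₂ hne w hw₁ hw₂
  have key : ∀ u, u ∈ cliq X u₁ u₂ → u ≠ w → X.Adj w u := by
    intro u hu huw
    by_cases h1 : u = z₁
    · rw [h1]; exact hw₁
    by_cases h2 : u = z₂
    · rw [h2]; exact hw₂
    · have ha1 : X.Adj u z₁ := cliq_adj hX h12 u hu z₁ hz₁ h1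
      have ha2 : X.Adj u z₂ := cliq_adj hX h12 u hu z₂ hz₂ h2
      exact (k4h hX (cliq_adj hX h12 z₁ hz₁ z₂ hz₂ hne) ha1.symm hw₁.symm ha2.symm hw₂.symm
        huw).symm
  by_cases e1 : w = u₁
  · rw [e1]; exact cliq_mem₁
  by_cases e2 : w = u₂
  · rw [e2]; exact cliq_mem₂
  · exact Or.inr ⟨key u₁ cliq_mem₁ (fun h => e1 h.symm), key u₂ cliq_mem₂ (fun h => e2 h.symm)⟩

lemma gate_exists (hX : QuasiMedian X) {u₁ u₂ : V} (h12 : X.Adj u₁ u₂) (x : V) :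
    ∃ y ∈ cliq X u₁ u₂, ∀ z ∈ cliq X u₁ u₂, X.dist x z = X.dist x y + X.dist y z := by
  classical
  have hc := hX.1
  have hne : {n | ∃ y ∈ cliq X u₁ u₂, X.dist x y = n}.Nonempty :=
    ⟨X.dist x u₁, u₁, cliq_mem₁, rfl⟩
  obtain ⟨y, hyK, hyd⟩ := Nat.sInf_mem hne
  refine ⟨y, hyK, fun z hzK => ?_⟩
  by_cases hzy : z = y
  · rw [hzy, SimpleGraph.dist_self]; omega
  · have hadj : X.Adj y z := cliq_adj hX h12 y hyK z hzK (fun h => hzy h.symm)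
    have hmin : sInf {n | ∃ y ∈ cliq X u₁ u₂, X.dist x y = n} ≤ X.dist x z :=
      Nat.sInf_le ⟨z, hzK, rfl⟩
    have hle : X.dist x z ≤ X.dist x y + 1 := by
      have := tri hc x y z; rw [adj_dist hadj] at this; omega
    rcases (by omega : X.dist x z = X.dist x y ∨ X.dist x z = X.dist x y + 1) with he | he
    · exfalso
      obtain ⟨w, hw1, hw2, hw3⟩ := hX.2.1 x y z hadj he.symm
      have hwK : w ∈ cliq X u₁ u₂ :=
        cliq_closed hX h12 y hyK z hzK (fun h => hzy h.symm) w hw1 hw2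
      have : sInf {n | ∃ y ∈ cliq X u₁ u₂, X.dist x y = n} ≤ X.dist x w :=
        Nat.sInf_le (Set.mem_setOf_eq ▸ ⟨w, hwK, rfl⟩)
      omega
    · rw [he, adj_dist hadj]

/-- A gate system: a gated clique `K` that is closed under common neighbours,
together with a choice of gates. -/
structure GS (X : SimpleGraph V) (K : Set V) (p : V → V) : Prop where
  qm : QuasiMedian X
  cl : ∀ z₁ ∈ K, ∀ z₂ ∈ K, z₁ ≠ z₂ → X.Adj z₁ z₂
  mem : ∀ x, p x ∈ K
  spec : ∀ x, ∀ z ∈ K, X.dist x z = X.dist x (p x) + X.dist (p x) z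

namespace GS

variable {K : Set V} {p : V → V}

lemma conn (h : GS X K p) : X.Connected := h.qm.1

lemma le (h : GS X K p) (x : V) {z : V} (hz : z ∈ K) : X.dist x (p x) ≤ X.dist x z := by
  have := h.spec x z hz; omega

lemma pz (h : GS X K p) {x z : V} (hz : z ∈ K) (hne : z ≠ p x) :
    X.dist x z = X.dist x (p x) + 1 := by
  have h1 := h.spec x z hz
  have h2 : X.dist (p x) z = 1 := adj_dist (h.cl _ (h.mem x) _ hz (fun he => hne he.symm))
  omega

lemma self (h : GS X K p) {z : V} (hz : z ∈ K) : p z = z := by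
  have h1 := h.spec z z hz
  rw [SimpleGraph.dist_self] at h1
  have : X.dist z (p z) = 0 := by omega
  exact (dist_eq_zero h.conn this).symm

lemma pin (h : GS X K p) {n x q : V} (hadj : X.Adj n x) (hq : q ∈ K)
    (hd : X.dist n q + 1 = X.dist x (p x)) :
    p n = q ∧ X.dist n (p n) + 1 = X.dist x (p x) := by
  have hle : X.dist n (p n) ≤ X.dist n q := h.le n hq
  by_cases hpq : p n = q
  · refine ⟨hpq, ?_⟩
    have heq : X.dist n q = X.dist n (p n) := by rw [hpq]
    omega
  · exfalso
    have h1 : X.dist n q = X.dist n (p n) + 1 := h.pz hq (fun he => hpq he.symm)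
    have h2 : X.dist x (p n) ≤ 1 + X.dist n (p n) := tri_adj h.conn hadj.symm _
    have h3 : X.dist x (p x) ≤ X.dist x (p n) := h.le x (h.mem n)
    omega

lemma eqh (h : GS X K p) {x y : V} (hadj : X.Adj x y) (hne : p x ≠ p y) :
    X.dist x (p x) = X.dist y (p y) := by
  have h1 : X.dist x (p y) = X.dist x (p x) + 1 := h.pz (h.mem y) (Ne.symm hne)
  have h2 : X.dist y (p x) = X.dist y (p y) + 1 := h.pz (h.mem x) hne
  have h3 : X.dist x (p y) ≤ 1 + X.dist y (p y) := tri_adj h.conn hadj _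
  have h4 : X.dist y (p x) ≤ 1 + X.dist x (p x) := tri_adj h.conn hadj.symm _
  omega

lemma subl_aux (h : GS X K p) {x y z : V} (hxy : X.Adj x y) (hne : p x ≠ p y)
    (hzx : X.Adj z x) (hzy : X.Adj z y) (hzx' : z ≠ x) : p z ≠ p x := by
  intro hzeq
  have hc := h.conn
  have hk := h.eqh hxy hne
  have e1 : X.dist z (p y) = X.dist z (p z) + 1 := h.pz (h.mem y) (fun he => hne (hzeq ▸ he.symm))
  have e2 : X.dist z (p y) ≤ 1 + X.dist y (p y) := tri_adj hc hzy _
  have e3 : X.dist y (p x) = X.dist y (p y) + 1 := h.pz (h.mem x) hne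
  have e4 : X.dist y (p x) ≤ 1 + X.dist z (p x) := tri_adj hc hzy.symm _
  have e5 : X.dist z (p x) = X.dist z (p z) := by rw [hzeq]
  have hzz : X.dist z (p z) = X.dist x (p x) := by omega
  rcases Nat.eq_zero_or_pos (X.dist x (p x)) with h0 | hpos
  · have hx1 : x = p x := dist_eq_zero hc (by omega)
    have hz1 : z = p z := dist_eq_zero hc (by omega)
    exact hzx' (by rw [hz1, hx1, hzeq])
  obtain ⟨k, hk'⟩ : ∃ k, X.dist x (p x) = k + 1 := ⟨_, (Nat.succ_pred_eq_of_pos hpos).symm⟩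
  obtain ⟨w, hw1, hw2, hw3⟩ := h.qm.2.1 (p x) x z hzx.symm
    (by rw [dcomm X (p x) x, dcomm X (p x) z]; omega)
  -- hw3 : dist (p x) w + 1 = dist (p x) x = k + 1
  have hwy : w ≠ y := by
    intro he
    rw [he, dcomm X (p x) y] at hw3
    rw [dcomm X (p x) x] at hw3
    omega
  have hwyadj : X.Adj w y := k4h h.qm hzx.symm hw1.symm hxy hw2.symm hzy hwy
  have : X.dist y (p x) ≤ 1 + X.dist w (p x) := tri_adj hc hwyadj.symm _
  rw [dcomm X (p x) x, dcomm X (p x) w] at hw3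
  omega

lemma subl (h : GS X K p) {x y z : V} (hxy : X.Adj x y) (hne : p x ≠ p y)
    (hzx : X.Adj z x) (hzy : X.Adj z y) (hzx' : z ≠ x) (hzy' : z ≠ y) :
    p z ≠ p x ∧ p z ≠ p y ∧ X.dist z (p z) = X.dist x (p x) := by
  have h1 : p z ≠ p x := h.subl_aux hxy hne hzx hzy hzx'
  have h2 : p z ≠ p y := h.subl_aux hxy.symm (Ne.symm hne) hzy hzx hzy'
  refine ⟨h1, h2, ?_⟩
  have e1 : X.dist x (p z) = X.dist x (p x) + 1 := h.pz (h.mem z) h1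
  have e2 : X.dist x (p z) ≤ 1 + X.dist z (p z) := tri_adj h.conn hzx.symm _
  have e3 : X.dist z (p x) = X.dist z (p z) + 1 := h.pz (h.mem x) (Ne.symm h1)
  have e4 : X.dist z (p x) ≤ 1 + X.dist x (p x) := tri_adj h.conn hzx _
  omega

lemma ladder (h : GS X K p) {x y : V} (hxy : X.Adj x y) (hne : p x ≠ p y) {k : ℕ}
    (hk : X.dist x (p x) = k + 1) :
    ∃ x₁ y₁, X.Adj x x₁ ∧ X.Adj y y₁ ∧ X.Adj x₁ y₁ ∧ ¬ X.Adj x y₁ ∧ ¬ X.Adj y x₁ ∧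
      x ≠ y₁ ∧ y ≠ x₁ ∧ p x₁ = p x ∧ p y₁ = p y ∧
      X.dist x₁ (p x₁) = k ∧ X.dist y₁ (p y₁) = k := by
  have hc := h.conn
  have hky : X.dist y (p y) = k + 1 := by rw [← h.eqh hxy hne]; exact hk
  obtain ⟨x₁, hxx₁, hx₁d⟩ := exists_nbr hc hk
  obtain ⟨hpx₁, hhx₁⟩ := h.pin hxx₁.symm (h.mem x) (by omega)
  have hx₁h : X.dist x₁ (p x₁) = k := by omega
  have hnyx₁ : ¬ X.Adj y x₁ := by
    intro hadj
    have := h.eqh hadj (by rw [hpx₁]; exact Ne.symm hne)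
    omega
  have hyx₁ : y ≠ x₁ := by
    intro he
    exact hne (by rw [← hpx₁, ← he])
  have hd2 : X.dist x₁ y = 2 :=
    dist_two hc (Ne.symm hyx₁) (fun hadj => hnyx₁ hadj.symm) hxx₁.symm hxy
  have a1 : X.dist x (p y) = X.dist x (p x) + 1 := h.pz (h.mem y) (Ne.symm hne)
  have a2 : X.dist x₁ (p y) = X.dist x₁ (p x₁) + 1 :=
    h.pz (h.mem y) (by rw [hpx₁]; exact Ne.symm hne)
  have q1 : X.dist (p y) x = X.dist (p y) x₁ + 1 := by
    rw [dcomm X (p y) x, dcomm X (p y) x₁]; omega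
  have q2 : X.dist (p y) x = X.dist (p y) y + 1 := by
    rw [dcomm X (p y) x, dcomm X (p y) y]; omega
  obtain ⟨w, hw1, hw2, hw3⟩ := h.qm.2.2.1 (p y) x₁ y x hxx₁ hxy hd2 q1 q2
  have hwpy : X.dist w (p y) = k := by
    rw [dcomm X (p y) x, a1, hk] at hw3
    rw [dcomm X w (p y)]; omega
  obtain ⟨hpw, hwh⟩ := h.pin hw2 (h.mem y) (by omega)
  have hwx : ¬ X.Adj x w := by
    intro hadj
    have := h.eqh hadj (by rw [hpw]; exact hne)
    omega
  have hxw : x ≠ w := by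
    intro he
    exact hne (by rw [he, hpw])
  exact ⟨x₁, w, hxx₁, hw2.symm, hw1.symm, hwx, hnyx₁, hxw, hyx₁, hpx₁, hpw, hx₁h, by omega⟩

lemma caseA (h : GS X K p) {a b c d : V}
    (hab : X.Adj a b) (hbc : X.Adj b c) (hcd : X.Adj c d) (hda : X.Adj d a)
    (hac : a ≠ c) (hacn : ¬ X.Adj a c) (hbd : b ≠ d) (hbdn : ¬ X.Adj b d)
    (hpab : p a ≠ p b) (hpca : p c = p a) (hpda : p d = p a) : False := by
  have hc := h.conn
  have hhb : X.dist b (p b) = X.dist a (p a) := (h.eqh hab hpab).symm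
  have hhc : X.dist c (p c) = X.dist a (p a) := by
    rw [← (h.eqh hbc (by rw [hpca]; exact Ne.symm hpab))]; exact hhb
  have hcα : X.dist c (p a) = X.dist a (p a) := hpca ▸ hhc
  rcases Nat.eq_zero_or_pos (X.dist a (p a)) with h0 | hpos
  · have e1 : a = p a := dist_eq_zero hc (by omega)
    have e2 : c = p a := dist_eq_zero hc (by omega)
    exact hac (e1.trans e2.symm)
  obtain ⟨k, hk⟩ : ∃ k, X.dist a (p a) = k + 1 := ⟨_, (Nat.succ_pred_eq_of_pos hpos).symm⟩
  have hd2 : X.dist a c = 2 := dist_two hc hac hacn hab hbc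
  have hbα : X.dist b (p a) = X.dist b (p b) + 1 := h.pz (h.mem a) hpab
  obtain ⟨w, hwa, hwc, hwd⟩ := h.qm.2.2.1 (p a) a c b hab.symm hbc hd2
    (by rw [dcomm X (p a) b, dcomm X (p a) a]; omega)
    (by rw [dcomm X (p a) b, dcomm X (p a) c]; omega)
  have hwα : X.dist w (p a) = k := by
    rw [dcomm X (p a) b, dcomm X (p a) w] at hwd; omega
  obtain ⟨hpw, hww⟩ := h.pin hwa (h.mem a) (by omega)
  by_cases hwd' : w = d
  · -- w = d
    have hdα : X.dist d (p a) = k := by rw [← hwd']; exact hwα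
    have hdb2 : X.dist b d = 2 := dist_two hc hbd hbdn hab.symm hda.symm
    have haβ : X.dist a (p b) = X.dist a (p a) + 1 := h.pz (h.mem b) hpab.symm
    have hdβ : X.dist d (p b) = X.dist d (p d) + 1 :=
      h.pz (h.mem b) (by rw [hpda]; exact hpab.symm)
    have hdh : X.dist d (p d) = k := by rw [hpda]; exact hdα
    obtain ⟨s, hsb, hsd, hsd2⟩ := h.qm.2.2.1 (p b) b d a hab hda.symm hdb2
      (by rw [dcomm X (p b) a, dcomm X (p b) b]; omega)
      (by rw [dcomm X (p b) a, dcomm X (p b) d]; omega)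
    have hsβ : X.dist s (p b) = k := by
      rw [dcomm X (p b) a, dcomm X (p b) s] at hsd2; omega
    obtain ⟨hps, hsh⟩ := h.pin hsb (h.mem b) (by omega)
    have hnas : ¬ X.Adj a s := by
      intro hadj
      have := h.eqh hadj (by rw [hps]; exact hpab)
      omega
    have hncs : ¬ X.Adj c s := by
      intro hadj
      have := h.eqh hadj (by rw [hps, hpca]; exact hpab)
      omega
    have has : a ≠ s := fun he => hpab (by rw [he, hps])
    have hcs : c ≠ s := by
      intro he
      apply hpab
      rw [← hpca, he, hps]
    exact k23h h.qm hbd hac hcs has hab.symm hbc hsb.symm hda hcd.symm hsd.symm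
      hbdn hacn hncs hnas
  · -- w ≠ d
    have hndw : ¬ X.Adj d w := by
      intro hadj
      exact hacn (k4h h.qm hadj hda hcd.symm hwa hwc hac)
    have hnbw : ¬ X.Adj b w := by
      intro hadj
      have := h.eqh hadj (by rw [hpw]; exact hpab.symm)
      omega
    have hbw : b ≠ w := fun he => hpab (by rw [he, hpw])
    exact k23h h.qm hac hbd (fun he => hwd' he.symm) hbw hab hda.symm hwa.symm
      hbc.symm hcd hwc.symm hacn hbdn hndw hnbw

lemma caseC (h : GS X K p) {a b c d : V}
    (hab : X.Adj a b) (hbc : X.Adj b c) (hcd : X.Adj c d) (hda : X.Adj d a)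
    (hac : a ≠ c) (hacn : ¬ X.Adj a c) (hbd : b ≠ d) (hbdn : ¬ X.Adj b d)
    (hpab : p a ≠ p b) (hpcd : p c = p d) (hca : p c ≠ p a) (hcb : p c ≠ p b) : False := by
  have hc := h.conn
  have hqm := h.qm
  have hhb : X.dist b (p b) = X.dist a (p a) := (h.eqh hab hpab).symm
  have hhc : X.dist c (p c) = X.dist a (p a) := by
    rw [← (h.eqh hbc (Ne.symm hcb))]; exact hhb
  have hpd : p a ≠ p d := by rw [← hpcd]; exact Ne.symm hca
  have hhd : X.dist d (p d) = X.dist a (p a) := h.eqh hda (by rw [← hpcd]; exact hca)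
  rcases Nat.eq_zero_or_pos (X.dist a (p a)) with h0 | hpos
  · have e1 : c = p c := dist_eq_zero hc (by omega)
    have e2 : d = p d := dist_eq_zero hc (by omega)
    exact hcd.ne (by rw [e1, hpcd, ← e2])
  obtain ⟨k, hk⟩ : ∃ k, X.dist a (p a) = k + 1 := ⟨_, (Nat.succ_pred_eq_of_pos hpos).symm⟩
  have had : X.Adj a d := hda.symm
  -- gate of (p b) in the clique of the edge (a,d)
  obtain ⟨m, hmK', hmspec⟩ := gate_exists hqm had (p b)
  have haβ : X.dist a (p b) = X.dist a (p a) + 1 := h.pz (h.mem b) hpab.symm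
  have hdβ : X.dist d (p b) = X.dist d (p d) + 1 := h.pz (h.mem b) (by rw [← hpcd]; exact hcb.symm)
  have hma : m ≠ a := by
    intro he
    have := hmspec d cliq_mem₂
    rw [he, dcomm X (p b) d, dcomm X (p b) a, adj_dist had] at this
    omega
  have hmd : m ≠ d := by
    intro he
    have := hmspec a cliq_mem₁
    rw [he, dcomm X (p b) a, dcomm X (p b) d, adj_dist hda] at this
    omega
  have hm' : X.Adj m a ∧ X.Adj m d := by
    rcases cliq_cases hmK' with h1 | h1 | h1
    · exact absurd h1 hma
    · exact absurd h1 hmd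
    · exact h1
  obtain ⟨s1, s2, s3⟩ := h.subl had hpd hm'.1 hm'.2 hma hmd
  have hβm : X.dist m (p b) = X.dist a (p a) := by
    have := hmspec a cliq_mem₁
    rw [dcomm X (p b) a, dcomm X (p b) m, adj_dist hm'.1] at this
    omega
  have hpm : p m = p b := by
    by_contra hno
    have := h.pz (x := m) (h.mem b) (Ne.symm hno)
    omega
  have hmb : m ≠ b := by
    intro he
    rw [he] at hm'
    exact hbdn hm'.2
  have hnmb : ¬ X.Adj m b := by
    intro hadj
    obtain ⟨t1, t2, t3⟩ := h.subl hab hpab hm'.1 hadj hma hmb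
    exact t2 hpm
  have hdist_bm : X.dist b m = 2 :=
    dist_two hc (Ne.symm hmb) (fun h' => hnmb h'.symm) hab.symm hm'.1.symm
  obtain ⟨y₀, hy₀b, hy₀m, hy₀d⟩ := hqm.2.2.1 (p b) b m a hab hm'.1.symm hdist_bm
    (by rw [dcomm X (p b) a, dcomm X (p b) b]; omega)
    (by rw [dcomm X (p b) a, dcomm X (p b) m]; omega)
  have hy₀β : X.dist y₀ (p b) = k := by
    rw [dcomm X (p b) a, dcomm X (p b) y₀] at hy₀d; omega
  obtain ⟨hpy₀, hy₀h⟩ := h.pin hy₀b (h.mem b) (by omega)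
  have hnay₀ : ¬ X.Adj a y₀ := by
    intro hadj
    have := h.eqh hadj (by rw [hpy₀]; exact hpab)
    omega
  have hay₀ : a ≠ y₀ := fun he => hpab (by rw [he, hpy₀])
  have hd_ay₀ : X.dist a y₀ = 2 := dist_two hc hay₀ hnay₀ hab hy₀b.symm
  have hy₀α : X.dist y₀ (p a) = X.dist y₀ (p y₀) + 1 :=
    h.pz (h.mem a) (by rw [hpy₀]; exact hpab)
  have hbα : X.dist b (p a) = X.dist b (p b) + 1 := h.pz (h.mem a) hpab
  obtain ⟨t, hta, hty₀, htd⟩ := hqm.2.2.1 (p a) a y₀ b hab.symm hy₀b.symm hd_ay₀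
    (by rw [dcomm X (p a) b, dcomm X (p a) a]; omega)
    (by rw [dcomm X (p a) b, dcomm X (p a) y₀]; omega)
  have htα : X.dist t (p a) = k := by
    rw [dcomm X (p a) b, dcomm X (p a) t] at htd; omega
  obtain ⟨hpt, hth⟩ := h.pin hta (h.mem a) (by omega)
  -- final K23 on the pair (a, y₀) with legs b, m, t
  have hbm : b ≠ m := Ne.symm hmb
  have hmt : m ≠ t := by
    intro he
    apply hpab
    rw [← hpm, he, hpt]
  have hbt : b ≠ t := by
    intro he
    apply hpab
    rw [← hpt, ← he]
  have hnmt : ¬ X.Adj m t := by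
    intro hadj
    have := h.eqh hadj (by rw [hpm, hpt]; exact hpab.symm)
    omega
  have hnbt : ¬ X.Adj b t := by
    intro hadj
    have := h.eqh hadj (by rw [hpt]; exact hpab.symm)
    omega
  exact k23h hqm hay₀ hbm hmt hbt hab hm'.1.symm hta.symm hy₀b hy₀m hty₀.symm
    hnay₀ (fun h' => hnmb h'.symm) hnmt hnbt

lemma crux (h : GS X K p) {a b c d : V}
    (hab : X.Adj a b) (hbc : X.Adj b c) (hcd : X.Adj c d) (hda : X.Adj d a)
    (hac : a ≠ c) (hacn : ¬ X.Adj a c) (hbd : b ≠ d) (hbdn : ¬ X.Adj b d)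
    (hpab : p a ≠ p b) : p c ≠ p d := by
  intro hcd'
  by_cases h1 : p c = p a
  · exact h.caseA hab hbc hcd hda hac hacn hbd hbdn hpab h1 (hcd'.symm.trans h1)
  by_cases h2 : p c = p b
  · exact h.caseA hab.symm hda.symm hcd.symm hbc.symm hbd hbdn hac hacn hpab.symm
      (hcd'.symm.trans h2) h2
  · exact h.caseC hab hbc hcd hda hac hacn hbd hbdn hpab hcd' h1 h2

end GS

/-! ### Hyperplanes: edges with distinct gates are exactly the hyperplane edges -/

lemma er_tri {a b c : V} (h1 : X.Adj a b) (h2 : X.Adj b c) (h3 : X.Adj a c) :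
    EdgeRel X s(a, b) s(b, c) := Or.inl ⟨a, b, c, h1, h2, h3, rfl, rfl⟩

lemma edgeRel_symm {e f : Sym2 V} (h : EdgeRel X e f) : EdgeRel X f e := by
  rcases h with ⟨a, b, c, h1, h2, h3, he, hf⟩ | ⟨a, b, c, d, h1, h2, h3, h4, n1, n2, n3, n4, he, hf⟩
  · exact Or.inl ⟨c, b, a, h2.symm, h1.symm, h3.symm, hf.trans Sym2.eq_swap,
      he.trans Sym2.eq_swap⟩
  · exact Or.inr ⟨c, d, a, b, h3, h4, h1, h2, Ne.symm n1, fun h' => n2 h'.symm,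
      Ne.symm n3, fun h' => n4 h'.symm, hf, he⟩

lemma rtg_symm {e f : Sym2 V} (h : Relation.ReflTransGen (EdgeRel X) e f) :
    Relation.ReflTransGen (EdgeRel X) f e := by
  induction h with
  | refl => exact .refl
  | tail _ h2 ih =>
    exact Relation.ReflTransGen.trans (Relation.ReflTransGen.single (edgeRel_symm h2)) ih

lemma mem_class {J : Set (Sym2 V)} (hJ : IsHyperplane X J) {f : Sym2 V} (hf : f ∈ J) :
    J = {g | Relation.ReflTransGen (EdgeRel X) f g} := by
  obtain ⟨e, _, rfl⟩ := hJ
  have hf' : Relation.ReflTransGen (EdgeRel X) e f := hf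
  ext g
  simp only [Set.mem_setOf_eq]
  exact ⟨fun hg => (rtg_symm hf').trans hg, fun hg => hf'.trans hg⟩

lemma cliq_edge_rtg (hX : QuasiMedian X) {u₁ u₂ : V} (h12 : X.Adj u₁ u₂) {g₁ g₂ : V}
    (hg₁ : g₁ ∈ cliq X u₁ u₂) (hg₂ : g₂ ∈ cliq X u₁ u₂) (hne : g₁ ≠ g₂) :
    Relation.ReflTransGen (EdgeRel X) s(u₁, u₂) s(g₁, g₂) := by
  have adj := cliq_adj hX h12
  by_cases e1 : g₁ = u₁
  · rw [e1]
    by_cases e2 : g₂ = u₂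
    · rw [e2]
    · have h2 : X.Adj u₁ g₂ := adj _ cliq_mem₁ _ hg₂ (fun h => hne (e1.trans h))
      have h3 : X.Adj u₂ g₂ := adj _ cliq_mem₂ _ hg₂ (fun h => e2 h.symm)
      have her : EdgeRel X s(u₂, u₁) s(u₁, g₂) := er_tri h12.symm h2 h3
      rw [show s(u₂, u₁) = s(u₁, u₂) from Sym2.eq_swap] at her
      exact Relation.ReflTransGen.single her
  by_cases e1' : g₁ = u₂
  · rw [e1']
    by_cases e2 : g₂ = u₁
    · rw [e2, show s(u₂, u₁) = s(u₁, u₂) from Sym2.eq_swap]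
    · have h2 : X.Adj u₂ g₂ := adj _ cliq_mem₂ _ hg₂ (fun h => hne (e1'.trans h))
      have h3 : X.Adj u₁ g₂ := adj _ cliq_mem₁ _ hg₂ (fun h => e2 h.symm)
      exact Relation.ReflTransGen.single (er_tri h12 h2 h3)
  · have ha1 : X.Adj u₁ g₁ := adj _ cliq_mem₁ _ hg₁ (fun h => e1 h.symm)
    have ha2 : X.Adj u₂ g₁ := adj _ cliq_mem₂ _ hg₁ (fun h => e1' h.symm)
    have step1 : EdgeRel X s(u₁, u₂) s(u₂, g₁) := er_tri h12 ha2 ha1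
    by_cases e2 : g₂ = u₂
    · rw [e2, show s(g₁, u₂) = s(u₂, g₁) from Sym2.eq_swap]
      exact Relation.ReflTransGen.single step1
    by_cases e2' : g₂ = u₁
    · have step1' : EdgeRel X s(u₂, u₁) s(u₁, g₁) := er_tri h12.symm ha1 ha2
      rw [show s(u₂, u₁) = s(u₁, u₂) from Sym2.eq_swap] at step1'
      rw [e2', show s(g₁, u₁) = s(u₁, g₁) from Sym2.eq_swap]
      exact Relation.ReflTransGen.single step1'
    · have hb1 : X.Adj u₂ g₂ := adj _ cliq_mem₂ _ hg₂ (fun h => e2 h.symm)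
      have hb2 : X.Adj g₁ g₂ := adj _ hg₁ _ hg₂ hne
      have step2 : EdgeRel X s(u₂, g₁) s(g₁, g₂) := er_tri ha2 hb2 hb1
      exact Relation.ReflTransGen.tail (Relation.ReflTransGen.single step1) step2

lemma gs_cliq (hX : QuasiMedian X) {u₁ u₂ : V} (h12 : X.Adj u₁ u₂) :
    ∃ p : V → V, GS X (cliq X u₁ u₂) p := by
  classical
  choose p hp1 hp2 using gate_exists hX h12
  exact ⟨p, hX, cliq_adj hX h12, hp1, hp2⟩

lemma dj (hX : QuasiMedian X) {u₁ u₂ : V} (h12 : X.Adj u₁ u₂) {J : Set (Sym2 V)}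
    (hJ : IsHyperplane X J) (h0 : s(u₁, u₂) ∈ J) {p : V → V}
    (hgs : GS X (cliq X u₁ u₂) p) :
    ∀ k {x y : V}, X.Adj x y → p x ≠ p y → X.dist x (p x) = k → s(x, y) ∈ J := by
  intro k
  induction k using Nat.strong_induction_on with
  | _ k ih =>
    intro x y hxy hne hk
    cases k with
    | zero =>
      have hx : x ∈ cliq X u₁ u₂ := by
        have : x = p x := dist_eq_zero hgs.conn hk
        rw [this]; exact hgs.mem x
      have hy : y ∈ cliq X u₁ u₂ := by
        have : y = p y := dist_eq_zero hgs.conn (by rw [← hgs.eqh hxy hne]; exact hk)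
        rw [this]; exact hgs.mem y
      rw [mem_class hJ h0]
      exact cliq_edge_rtg hX h12 hx hy hxy.ne
    | succ k' =>
      obtain ⟨x₁, y₁, hxx₁, hyy₁, hx₁y₁, hnxy₁, hnyx₁, hxy₁, hyx₁, hpx₁, hpy₁, hh₁, _⟩ :=
        hgs.ladder hxy hne hk
      have hmem : s(x₁, y₁) ∈ J :=
        ih k' (by omega) hx₁y₁ (by rw [hpx₁, hpy₁]; exact hne) hh₁
      have her : EdgeRel X s(x, y) s(y₁, x₁) :=
        Or.inr ⟨x, y, y₁, x₁, hxy, hyy₁, hx₁y₁.symm, hxx₁.symm, hxy₁, hnxy₁, hyx₁, hnyx₁,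
          rfl, rfl⟩
      rw [show s(y₁, x₁) = s(x₁, y₁) from Sym2.eq_swap] at her
      rw [mem_class hJ hmem]
      exact Relation.ReflTransGen.single (edgeRel_symm her)

lemma jd (hX : QuasiMedian X) {u₁ u₂ : V} (h12 : X.Adj u₁ u₂) {J : Set (Sym2 V)}
    (hJ : IsHyperplane X J) (h0 : s(u₁, u₂) ∈ J) {p : V → V}
    (hgs : GS X (cliq X u₁ u₂) p) :
    ∀ f ∈ J, ∃ x y : V, f = s(x, y) ∧ X.Adj x y ∧ p x ≠ p y := by
  intro f hf
  rw [mem_class hJ h0] at hf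
  induction hf with
  | refl =>
    exact ⟨u₁, u₂, rfl, h12, by
      rw [hgs.self cliq_mem₁, hgs.self cliq_mem₂]; exact h12.ne⟩
  | @tail mid g _ hstep ih =>
    obtain ⟨x, y, hfe, hxy, hne⟩ := ih
    rcases hstep with ⟨a, b, c, h1, h2, h3, he, hf'⟩ |
      ⟨a, b, c, d, h1, h2, h3, h4, n1, n2, n3, n4, he, hf'⟩
    · have hab : p a ≠ p b := by
        rcases Sym2.eq_iff.1 (hfe.symm.trans he) with ⟨ha, hb⟩ | ⟨ha, hb⟩
        · rw [← ha, ← hb]; exact hne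
        · rw [← ha, ← hb]; exact hne.symm
      obtain ⟨_, t2, _⟩ := hgs.subl h1 hab h3.symm h2.symm (Ne.symm h3.ne) (Ne.symm h2.ne)
      exact ⟨b, c, hf', h2, fun hh => t2 hh.symm⟩
    · have hab : p a ≠ p b := by
        rcases Sym2.eq_iff.1 (hfe.symm.trans he) with ⟨ha, hb⟩ | ⟨ha, hb⟩
        · rw [← ha, ← hb]; exact hne
        · rw [← ha, ← hb]; exact hne.symm
      exact ⟨c, d, hf', h3, hgs.crux h1 h2 h3 h4 n1 n2 n3 n4 hab⟩

lemma cross (hX : QuasiMedian X) {J : Set (Sym2 V)} (hJ : IsHyperplane X J)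
    {x y x' y' : V} (hxy : X.Adj x y) (h1 : s(x, y) ∈ J) (h2 : s(x', y') ∈ J)
    {D : ℕ} (d1 : X.dist y x' = D) (d2 : X.dist x x' = D + 1)
    (d3 : X.dist y y' = D + 1) (d4 : X.dist x y' = D + 2) : False := by
  obtain ⟨p, hgs⟩ := gs_cliq hX hxy
  obtain ⟨x₀, y₀, hfe, hxy₀, hne₀⟩ := jd hX hxy hJ h1 hgs s(x', y') h2
  have hne : p x' ≠ p y' := by
    rcases Sym2.eq_iff.1 hfe with ⟨ha, hb⟩ | ⟨ha, hb⟩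
    · rw [ha, hb]; exact hne₀
    · rw [ha, hb]; exact hne₀.symm
  have hx'x : X.dist x' x = X.dist x' (p x') + X.dist (p x') x := hgs.spec x' x cliq_mem₁
  have hx'y : X.dist x' y = X.dist x' (p x') + X.dist (p x') y := hgs.spec x' y cliq_mem₂
  have hy'x : X.dist y' x = X.dist y' (p y') + X.dist (p y') x := hgs.spec y' x cliq_mem₁
  have hy'y : X.dist y' y = X.dist y' (p y') + X.dist (p y') y := hgs.spec y' y cliq_mem₂
  have dist01 : ∀ w z : V, z ∈ cliq X x y → p w ≠ z → X.dist (p w) z = 1 := fun w z hz hne' =>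
    adj_dist (hgs.cl _ (hgs.mem w) _ hz hne')
  rw [dcomm X y x'] at d1
  rw [dcomm X x x'] at d2
  rw [dcomm X y y'] at d3
  rw [dcomm X x y'] at d4
  have hPy : p x' = y := by
    by_cases hA : p x' = x
    · exfalso
      have e0 : X.dist (p x') x = 0 := by rw [hA]; exact SimpleGraph.dist_self
      have e1 : X.dist (p x') y = 1 :=
        dist01 x' y cliq_mem₂ (by rw [hA]; exact fun h => hxy.ne h)
      omega
    · by_cases hB : p x' = y
      · exact hB
      · exfalso
        have e0 : X.dist (p x') x = 1 := dist01 x' x cliq_mem₁ hA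
        have e1 : X.dist (p x') y = 1 := dist01 x' y cliq_mem₂ hB
        omega
  have hP'y : p y' = y := by
    by_cases hA : p y' = x
    · exfalso
      have e0 : X.dist (p y') x = 0 := by rw [hA]; exact SimpleGraph.dist_self
      have e1 : X.dist (p y') y = 1 :=
        dist01 y' y cliq_mem₂ (by rw [hA]; exact fun h => hxy.ne h)
      omega
    · by_cases hB : p y' = y
      · exact hB
      · exfalso
        have e0 : X.dist (p y') x = 1 := dist01 y' x cliq_mem₁ hA
        have e1 : X.dist (p y') y = 1 := dist01 y' y cliq_mem₂ hB
        omega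
  exact hne (hPy.trans hP'y.symm)

/-! ### Walks, geodesics, sectors -/

lemma getVert_dist_le (hc : X.Connected) {a b : V} (w : X.Walk a b) :
    ∀ i j : ℕ, i ≤ j → X.dist (w.getVert i) (w.getVert j) ≤ j - i := by
  induction w with
  | nil =>
    intro i j _
    rw [Walk.getVert_of_length_le _ (by simp), Walk.getVert_of_length_le _ (by simp),
      SimpleGraph.dist_self]
    omega
  | @cons u v b' h q ih =>
    intro i j hij
    cases i with
    | zero =>
      cases j with
      | zero => rw [SimpleGraph.dist_self]
      | succ j' =>
        rw [Walk.getVert_zero, Walk.getVert_cons_succ]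
        have h1 := tri_adj hc h (q.getVert j')
        have h2 := ih 0 j' (Nat.zero_le _)
        rw [Walk.getVert_zero] at h2
        omega
    | succ i' =>
      cases j with
      | zero => omega
      | succ j' =>
        rw [Walk.getVert_cons_succ, Walk.getVert_cons_succ]
        have := ih i' j' (by omega)
        omega

lemma geo_dist (hc : X.Connected) {a b : V} (w : X.Walk a b) (hw : w.length = X.dist a b)
    {i j : ℕ} (hij : i ≤ j) (hj : j ≤ w.length) :
    X.dist (w.getVert i) (w.getVert j) = j - i := by
  have h1 := getVert_dist_le hc w i j hij
  have h2 := getVert_dist_le hc w 0 i (Nat.zero_le _)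
  have h3 := getVert_dist_le hc w j w.length hj
  rw [Walk.getVert_zero] at h2
  rw [Walk.getVert_length] at h3
  have t1 := tri hc a (w.getVert i) b
  have t2 := tri hc (w.getVert i) (w.getVert j) b
  omega

lemma walk_gate_change (p : V → V) : ∀ {a b : V} (w : X.Walk a b), p a ≠ p b →
    ∃ i, i < w.length ∧ p (w.getVert i) ≠ p (w.getVert (i + 1)) := by
  intro a b w
  induction w with
  | nil => intro h; exact absurd rfl h
  | @cons u v b' h q ih =>
    intro hne
    by_cases hv : p u = p v
    · obtain ⟨i, hi, hgi⟩ := ih (fun he => hne (hv.trans he))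
      refine ⟨i + 1, ?_, ?_⟩
      · rw [Walk.length_cons]; omega
      · rwa [Walk.getVert_cons_succ, Walk.getVert_cons_succ]
    · refine ⟨0, ?_, ?_⟩
      · rw [Walk.length_cons]; omega
      · rwa [Walk.getVert_zero, Walk.getVert_cons_succ, Walk.getVert_zero]

lemma reach_gate (hX : QuasiMedian X) {u₁ u₂ : V} (h12 : X.Adj u₁ u₂) {J : Set (Sym2 V)}
    (hJ : IsHyperplane X J) (h0 : s(u₁, u₂) ∈ J) {p : V → V}
    (hgs : GS X (cliq X u₁ u₂) p) {z₁ z₂ : V}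
    (hr : (X.deleteEdges J).Reachable z₁ z₂) : p z₁ = p z₂ := by
  obtain ⟨w⟩ := hr
  induction w with
  | nil => rfl
  | @cons zz vv bb h q ih =>
    rw [SimpleGraph.deleteEdges_adj] at h
    have h1 : p zz = p vv := by
      by_contra hne
      exact h.2 (dj hX h12 hJ h0 hgs _ h.1 hne rfl)
    exact h1.trans ih

lemma fiber_sub (hX : QuasiMedian X) {u₁ u₂ : V} (h12 : X.Adj u₁ u₂) {J : Set (Sym2 V)}
    (hJ : IsHyperplane X J) (h0 : s(u₁, u₂) ∈ J) {p : V → V}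
    (hgs : GS X (cliq X u₁ u₂) p) :
    ∀ k {w : V}, X.dist w u₁ = k → p w = u₁ → (X.deleteEdges J).Reachable u₁ w := by
  intro k
  induction k using Nat.strong_induction_on with
  | _ k ih =>
    intro w hk hp
    cases k with
    | zero => rw [dist_eq_zero hgs.conn hk]
    | succ k' =>
      obtain ⟨w₁, hww₁, hw₁d⟩ := exists_nbr hgs.conn hk
      have hw_h : X.dist w (p w) = k' + 1 := by rw [hp]; exact hk
      have hpw₁ : p w₁ = u₁ := by
        by_cases hq : p w₁ = u₁
        · exact hq
        exfalso
        have e1 : X.dist w₁ u₁ = X.dist w₁ (p w₁) + 1 :=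
          hgs.pz cliq_mem₁ (fun he => hq he.symm)
        have e2 : X.dist w (p w₁) ≤ 1 + X.dist w₁ (p w₁) := tri_adj hgs.conn hww₁ _
        have e3 : X.dist w (p w₁) = X.dist w (p w) + 1 :=
          hgs.pz (hgs.mem w₁) (fun he => hq (he.trans hp))
        omega
      have hnJ : s(w, w₁) ∉ J := by
        intro hmem
        obtain ⟨x, y, hfe, hxy, hne⟩ := jd hX h12 hJ h0 hgs _ hmem
        have hne' : p w ≠ p w₁ := by
          rcases Sym2.eq_iff.1 hfe with ⟨ha, hb⟩ | ⟨ha, hb⟩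
          · rw [ha, hb]; exact hne
          · rw [ha, hb]; exact hne.symm
        exact hne' (hp.trans hpw₁.symm)
      have hr₁ : (X.deleteEdges J).Reachable u₁ w₁ := ih k' (by omega) hw₁d hpw₁
      refine hr₁.trans (SimpleGraph.Adj.reachable ?_)
      rw [SimpleGraph.deleteEdges_adj]
      exact ⟨hww₁.symm, fun hm => hnJ (by rwa [show s(w₁, w) = s(w, w₁) from Sym2.eq_swap] at hm)⟩

lemma sec_not_mid (hX : QuasiMedian X) {J : Set (Sym2 V)} (hJ : IsHyperplane X J)
    {u₁ u₂ : V} (h12 : X.Adj u₁ u₂) (h0 : s(u₁, u₂) ∈ J) {p : V → V}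
    (hgs : GS X (cliq X u₁ u₂) p) {a m b : V}
    (ha : p a ≠ u₁) (hb : p b ≠ u₁) (hm : p m = u₁)
    (hint : X.dist a m + X.dist m b = X.dist a b) : False := by
  have hc := hgs.conn
  obtain ⟨w₁, hw₁⟩ := (hc a m).exists_walk_length_eq_dist
  obtain ⟨w₂, hw₂⟩ := (hc m b).exists_walk_length_eq_dist
  set W := w₁.append w₂ with hW
  have hWL : W.length = w₁.length + w₂.length := Walk.length_append w₁ w₂
  have hWlen : W.length = X.dist a b := by rw [hWL, hw₁, hw₂, hint]
  obtain ⟨i, hi, hgi⟩ := walk_gate_change p w₁ (fun he => ha (he.trans hm))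
  obtain ⟨j, hj, hgj⟩ := walk_gate_change p w₂ (fun he => hb (hm.symm.trans he).symm)
  have hWv : ∀ t, t ≤ w₁.length → W.getVert t = w₁.getVert t := by
    intro t ht
    rw [hW, Walk.getVert_append]
    by_cases h' : t < w₁.length
    · simp [h']
    · have h'' : t = w₁.length := by omega
      simp only [h'', lt_self_iff_false, if_false, Nat.sub_self, Walk.getVert_zero,
        Walk.getVert_length]
  have hWv2 : ∀ t, W.getVert (w₁.length + t) = w₂.getVert t := by
    intro t
    rw [hW, Walk.getVert_append]
    have h' : ¬ (w₁.length + t < w₁.length) := by omega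
    simp only [h', if_false, Nat.add_sub_cancel_left]
  have hadj1 : X.Adj (w₁.getVert i) (w₁.getVert (i + 1)) := w₁.adj_getVert_succ hi
  have hadj2 : X.Adj (w₂.getVert j) (w₂.getVert (j + 1)) := w₂.adj_getVert_succ hj
  have hJ1 : s(w₁.getVert i, w₁.getVert (i + 1)) ∈ J := dj hX h12 hJ h0 hgs _ hadj1 hgi rfl
  have hJ2 : s(w₂.getVert j, w₂.getVert (j + 1)) ∈ J := dj hX h12 hJ h0 hgs _ hadj2 hgj rfl
  have g1 : X.dist (w₁.getVert (i + 1)) (w₂.getVert j) = (w₁.length + j) - (i + 1) := by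
    rw [← hWv (i + 1) (by omega), ← hWv2 j]
    exact geo_dist hc W hWlen (by omega) (by omega)
  have g2 : X.dist (w₁.getVert i) (w₂.getVert j) = (w₁.length + j) - i := by
    rw [← hWv i (by omega), ← hWv2 j]
    exact geo_dist hc W hWlen (by omega) (by omega)
  have g3 : X.dist (w₁.getVert (i + 1)) (w₂.getVert (j + 1)) = (w₁.length + (j + 1)) - (i + 1) := by
    rw [← hWv (i + 1) (by omega), ← hWv2 (j + 1)]
    exact geo_dist hc W hWlen (by omega) (by omega)
  have g4 : X.dist (w₁.getVert i) (w₂.getVert (j + 1)) = (w₁.length + (j + 1)) - i := by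
    rw [← hWv i (by omega), ← hWv2 (j + 1)]
    exact geo_dist hc W hWlen (by omega) (by omega)
  exact cross hX hJ hadj1 hJ1 hJ2 (D := w₁.length + j - (i + 1)) g1
    (by omega) (by omega) (by omega)

lemma find_cross {J : Set (Sym2 V)} {v₀ : V} :
    ∀ {z₁ z₂ : V} (_ : X.Walk z₁ z₂), (X.deleteEdges J).Reachable v₀ z₁ →
      ¬ (X.deleteEdges J).Reachable v₀ z₂ →
      ∃ a b, X.Adj a b ∧ (X.deleteEdges J).Reachable v₀ a ∧ s(a, b) ∈ J := by
  intro z₁ z₂ w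
  induction w with
  | nil => intro h1 h2; exact absurd h1 h2
  | @cons u v b h q ih =>
    intro h1 h2
    by_cases hm : s(u, v) ∈ J
    · exact ⟨u, v, h, h1, hm⟩
    · exact ih (h1.trans (SimpleGraph.Adj.reachable
        (by rw [SimpleGraph.deleteEdges_adj]; exact ⟨h, hm⟩))) h2

end QMAux
open QMAux in
/-- If pairwise intersecting gated subgraphs have their intersection inside a
sector `S`, then one of them is contained in `S`. -/
theorem stmt5 (X : SimpleGraph V) (hX : QuasiMedian X)
    (J : Set (Sym2 V)) (hJ : IsHyperplane X J) (S : Set V) (hS : IsSectorOf X J S)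
    (n : ℕ) (hn : 0 < n) (Y : Fin n → Set V)
    (hgated : ∀ i, IsGated X (Y i))
    (hpair : ∀ i j, (Y i ∩ Y j).Nonempty)
    (hsub : (⋂ i, Y i) ⊆ S) :
    ∃ i, Y i ⊆ S := by
  classical
  obtain ⟨v₀, rfl⟩ := hS
  by_cases hall : ∀ w, (X.deleteEdges J).Reachable v₀ w
  · exact ⟨⟨0, hn⟩, fun y _ => hall y⟩
  push_neg at hall
  obtain ⟨w₀, hw₀⟩ := hall
  obtain ⟨wk⟩ := hX.1 v₀ w₀
  obtain ⟨u, u', huu', huS, hmem⟩ := find_cross wk (Reachable.refl v₀) hw₀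
  obtain ⟨p, hgs⟩ := gs_cliq hX huu'
  have hfib : ∀ z, (X.deleteEdges J).Reachable v₀ z ↔ p z = u := by
    intro z
    constructor
    · intro hz
      have h1 : p u = p z := reach_gate hX huu' hJ hmem hgs (huS.symm.trans hz)
      rw [← h1, hgs.self cliq_mem₁]
    · intro hz
      exact huS.trans (fiber_sub hX huu' hJ hmem hgs _ rfl hz)
  by_contra hno
  push_neg at hno
  have hCne : ∀ i, (Y i ∩ {w | p w ≠ u}).Nonempty := by
    intro i
    obtain ⟨y, hy1, hy2⟩ := Set.not_subset.1 (hno i)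
    exact ⟨y, hy1, fun hc => hy2 ((hfib y).2 hc)⟩
  have hCconv : IsConvexSet X {w | p w ≠ u} := by
    intro a ha b hb m hmI
    exact fun hm => sec_not_mid hX hJ huu' hmem hgs ha hb hm hmI
  obtain ⟨n', rfl⟩ : ∃ n', n = n' + 1 := ⟨n - 1, by omega⟩
  obtain ⟨z, hz1, hz2⟩ := hellyN hX.1 n' Y hgated hpair _ hCconv hCne
  exact hz2 ((hfib z).1 (hsub hz1))
end

section
/- Let X be a median graph and 𝒥 a collection of hyperplanes of X, with canonical projection π : X → X\\𝒥 onto the hyperplane-collapse. Then for all vertices x, y of X, the distance d(π(x), π(y)) in X\\𝒥 equals the number of hyperplanes of X not belonging to 𝒥 that separate x and y. -/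
open SimpleGraph

variable {V : Type*}

/-- The setoid identifying the endpoints of every edge whose hyperplane lies
in `𝒥` (edge contraction). -/
def collapseSetoid (X : SimpleGraph V) (𝒥 : Set (Set (Sym2 V))) : Setoid V :=
  Relation.EqvGen.setoid (fun x y => X.Adj x y ∧ ∃ J ∈ 𝒥, s(x, y) ∈ J)

/-- The hyperplane-collapse `X\\𝒥`, obtained by collapsing all edges belonging
to hyperplanes of `𝒥`. -/
def CollapseGraph (X : SimpleGraph V) (𝒥 : Set (Set (Sym2 V))) :
    SimpleGraph (Quotient (collapseSetoid X 𝒥)) :=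
  SimpleGraph.fromRel (fun u v => ∃ x y : V, X.Adj x y ∧
    Quotient.mk (collapseSetoid X 𝒥) x = u ∧ Quotient.mk (collapseSetoid X 𝒥) y = v)

namespace MedianCollapse

open Relation SimpleGraph

variable {X : SimpleGraph V}

lemma adj_dist_ne (hX : MedianGraph X) (o : V) {u v : V} (h : X.Adj u v) :
    X.dist o u ≠ X.dist o v := by
  intro he
  obtain ⟨m, ⟨h1, h2, h3⟩, -⟩ := hX.2 o u v
  unfold InInterval at h1 h2 h3
  have huv : X.dist u v = 1 := dist_eq_one_iff_adj.mpr h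
  have hvu : X.dist v u = 1 := dist_eq_one_iff_adj.mpr h.symm
  have hcase : X.dist u m = 0 ∨ X.dist m v = 0 := by omega
  rcases hcase with h0 | h0
  · have : u = m := hX.1.dist_eq_zero_iff.mp h0
    subst this
    omega
  · have : m = v := hX.1.dist_eq_zero_iff.mp h0
    subst this
    omega

lemma adj_dist_cases (hX : MedianGraph X) (o : V) {u v : V} (h : X.Adj u v) :
    X.dist o v = X.dist o u + 1 ∨ X.dist o u = X.dist o v + 1 := by
  have h1 : X.dist o u ≤ X.dist o v + X.dist v u := hX.1.dist_triangle
  have h2 : X.dist o v ≤ X.dist o u + X.dist u v := hX.1.dist_triangle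
  have h3 : X.dist u v = 1 := dist_eq_one_iff_adj.mpr h
  have h4 : X.dist v u = 1 := dist_eq_one_iff_adj.mpr h.symm
  have h5 := adj_dist_ne hX o h
  omega

lemma no_triangle (hX : MedianGraph X) {a b c : V} (hab : X.Adj a b)
    (hbc : X.Adj b c) (hac : X.Adj a c) : False := by
  have h1 : X.dist a b = 1 := dist_eq_one_iff_adj.mpr hab
  have h2 : X.dist a c = 1 := dist_eq_one_iff_adj.mpr hac
  exact adj_dist_ne hX a hbc (h1.trans h2.symm)

lemma square_side (hX : MedianGraph X) {p q r s : V} (hpq : X.Adj p q)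
    (hqr : X.Adj q r) (hrs : X.Adj r s) (hsp : X.Adj s p) (hpr : p ≠ r)
    (hqs : q ≠ s) (hnqs : ¬ X.Adj q s) (w : V)
    (hw : X.dist w q = X.dist w p + 1) : X.dist w r = X.dist w s + 1 := by
  by_contra hcon
  have hws : X.dist w s = X.dist w r + 1 := (adj_dist_cases hX w hrs).resolve_right hcon
  have h1 := adj_dist_cases hX w hqr
  have h2 := adj_dist_cases hX w hsp
  have hr : X.dist w r = X.dist w p ∧ X.dist w s = X.dist w p + 1 := by omega
  have e1 : X.dist q p = 1 := dist_eq_one_iff_adj.mpr hpq.symm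
  have e2 : X.dist p s = 1 := dist_eq_one_iff_adj.mpr hsp.symm
  have e3 : X.dist p q = 1 := dist_eq_one_iff_adj.mpr hpq
  have e4 : X.dist q r = 1 := dist_eq_one_iff_adj.mpr hqr
  have e5 : X.dist r q = 1 := dist_eq_one_iff_adj.mpr hqr.symm
  have e6 : X.dist r s = 1 := dist_eq_one_iff_adj.mpr hrs
  have hqs2 : X.dist q s = 2 := by
    have hle : X.dist q s ≤ X.dist q p + X.dist p s := hX.1.dist_triangle
    have h0 : X.dist q s ≠ 0 := fun h0 => hqs (hX.1.dist_eq_zero_iff.mp h0)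
    have h1' : X.dist q s ≠ 1 := fun h1' => hnqs (dist_eq_one_iff_adj.mp h1')
    omega
  obtain ⟨m, -, hu⟩ := hX.2 w q s
  have hmp : p = m := hu p ⟨by unfold InInterval; omega, by unfold InInterval; omega,
    by unfold InInterval; omega⟩
  have hmr : r = m := hu r ⟨by unfold InInterval; omega, by unfold InInterval; omega,
    by unfold InInterval; omega⟩
  exact hpr (hmp.trans hmr.symm)

lemma square_iff (hX : MedianGraph X) {p q r s : V} (hpq : X.Adj p q)
    (hqr : X.Adj q r) (hrs : X.Adj r s) (hsp : X.Adj s p) (hpr : p ≠ r)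
    (hnpr : ¬ X.Adj p r) (hqs : q ≠ s) (hnqs : ¬ X.Adj q s) (w : V) :
    X.dist w q = X.dist w p + 1 ↔ X.dist w r = X.dist w s + 1 :=
  ⟨square_side hX hpq hqr hrs hsp hpr hqs hnqs w,
   square_side hX hrs.symm hqr.symm hpq.symm hsp.symm hqs.symm hpr.symm
     (fun h => hnpr h.symm) w⟩

lemma edgeRel_symm : Symmetric (EdgeRel X) := by
  rintro e f (⟨a, b, c, h1, h2, h3, he, hf⟩ |
    ⟨a, b, c, d, h1, h2, h3, h4, hac, hnac, hbd, hnbd, he, hf⟩)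
  · exact Or.inl ⟨c, b, a, h2.symm, h1.symm, h3.symm, by rw [hf, Sym2.eq_swap],
      by rw [he, Sym2.eq_swap]⟩
  · exact Or.inr ⟨c, d, a, b, h3, h4, h1, h2, hac.symm, fun h => hnac h.symm,
      hbd.symm, fun h => hnbd h.symm, hf, he⟩

lemma class_crosses (hX : MedianGraph X) {u v : V} (huv : X.Adj u v)
    {g : Sym2 V} (hg : ReflTransGen (EdgeRel X) s(u, v) g) :
    ∃ a b : V, X.Adj a b ∧ g = s(a, b) ∧
      ∀ w, (X.dist w v = X.dist w u + 1 ↔ X.dist w b = X.dist w a + 1) := by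
  induction hg with
  | refl => exact ⟨u, v, huv, rfl, fun w => Iff.rfl⟩
  | tail hfg hrel ih =>
    obtain ⟨a, b, hab, hmid, hiff⟩ := ih
    subst hmid
    rcases hrel with ⟨x, y, z, h1, h2, h3, -, -⟩ |
      ⟨p, q, r, s, hpq, hqr, hrs, hsp, hpr, hnpr, hqs, hnqs, hf, hgeq⟩
    · exact (no_triangle hX h1 h2 h3).elim
    · rcases Sym2.eq_iff.mp hf with ⟨ha, hb⟩ | ⟨ha, hb⟩
      · subst ha; subst hb
        exact ⟨s, r, hrs.symm, hgeq.trans Sym2.eq_swap,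
          fun w => (hiff w).trans (square_iff hX hpq hqr hrs hsp hpr hnpr hqs hnqs w)⟩
      · subst ha; subst hb
        exact ⟨r, s, hrs, hgeq,
          fun w => (hiff w).trans (square_iff hX hpq.symm hsp.symm hrs.symm hqr.symm
            hqs hnqs hpr hnpr w)⟩

lemma step_side (hX : MedianGraph X) {u v w w₁ : V} (huv : X.Adj u v)
    (hww₁ : X.Adj w w₁) (hst : X.dist w₁ u + 1 = X.dist w u)
    (hw : X.dist w v = X.dist w u + 1) : X.dist w₁ v = X.dist w₁ u + 1 := by
  rcases adj_dist_cases hX w₁ huv with h | h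
  · exact h
  · have ht : X.dist w v ≤ X.dist w w₁ + X.dist w₁ v := hX.1.dist_triangle
    have h1 : X.dist w w₁ = 1 := dist_eq_one_iff_adj.mpr hww₁
    omega

lemma exists_step (hX : MedianGraph X) {a u : V} (h : X.dist a u ≠ 0) :
    ∃ b, X.Adj a b ∧ X.dist b u + 1 = X.dist a u := by
  obtain ⟨p, hp⟩ := hX.1.exists_walk_length_eq_dist a u
  cases p with
  | nil => rw [← hp] at h; simp at h
  | @cons _ c _ hac p' =>
    refine ⟨c, hac, ?_⟩
    have h1 : X.dist c u ≤ p'.length := dist_le p'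
    have h2 : X.dist a u ≤ X.dist a c + X.dist c u := hX.1.dist_triangle
    have h3 : X.dist a c = 1 := dist_eq_one_iff_adj.mpr hac
    rw [SimpleGraph.Walk.length_cons] at hp
    omega

lemma crossing_rtg (hX : MedianGraph X) {u v : V} (huv : X.Adj u v) :
    ∀ (k : ℕ) {a b : V}, X.dist a u = k → X.Adj a b →
      X.dist a v = X.dist a u + 1 → X.dist b u = X.dist b v + 1 →
      ReflTransGen (EdgeRel X) s(u, v) s(a, b) := by
  intro k
  induction k using Nat.strong_induction_on with
  | _ k ih =>
    intro a b hk hab hav hbu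
    have hdab : X.dist a b = 1 := dist_eq_one_iff_adj.mpr hab
    have hdba : X.dist b a = 1 := dist_eq_one_iff_adj.mpr hab.symm
    obtain ⟨hbv1, hbv2⟩ : X.dist b v = k ∧ X.dist b u = k + 1 := by
      have h1 := adj_dist_cases hX v hab
      have h2 : X.dist b u ≤ X.dist b a + X.dist a u := hX.1.dist_triangle
      have c1 : X.dist v a = X.dist a v := SimpleGraph.dist_comm
      have c2 : X.dist v b = X.dist b v := SimpleGraph.dist_comm
      omega
    rcases Nat.eq_zero_or_pos k with rfl | hkpos
    · have ha : a = u := hX.1.dist_eq_zero_iff.mp hk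
      have hb : b = v := hX.1.dist_eq_zero_iff.mp (by omega)
      subst ha; subst hb; exact ReflTransGen.refl
    · obtain ⟨a', haa', ha'⟩ := exists_step hX (a := a) (u := u) (by omega)
      have hda'a : X.dist a' a = 1 := dist_eq_one_iff_adj.mpr haa'.symm
      have hdaa' : X.dist a a' = 1 := dist_eq_one_iff_adj.mpr haa'
      have ha'v : X.dist a' v = X.dist a' u + 1 := step_side hX huv haa' ha' hav
      have ha'b : X.dist a' b = 2 := by
        have h1 : X.dist a' b ≤ X.dist a' a + X.dist a b := hX.1.dist_triangle
        have h4 : X.dist a' b ≠ 0 := by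
          intro h0
          have heq : a' = b := hX.1.dist_eq_zero_iff.mp h0
          subst heq
          omega
        have h5 : X.dist a' b ≠ 1 := fun h1' =>
          no_triangle hX haa' (dist_eq_one_iff_adj.mp h1') hab
        omega
      obtain ⟨m, ⟨hm1, hm2, hm3⟩, -⟩ := hX.2 v a' b
      unfold InInterval at hm1 hm2 hm3
      have e1 : X.dist v a' = k := by
        have c1 : X.dist v a' = X.dist a' v := SimpleGraph.dist_comm
        omega
      have e2 : X.dist v b = k := by
        have c2 : X.dist v b = X.dist b v := SimpleGraph.dist_comm
        omega
      obtain ⟨hma'1, hma'2, hma'3⟩ : X.dist m a' = 1 ∧ X.dist m b = 1 ∧ X.dist v m = k - 1 := by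
        have c3 : X.dist a' m = X.dist m a' := SimpleGraph.dist_comm
        omega
      have hadj_ma' : X.Adj m a' := dist_eq_one_iff_adj.mp hma'1
      have hadj_mb : X.Adj m b := dist_eq_one_iff_adj.mp hma'2
      have hmu : X.dist m u = k := by
        have h1 : X.dist b u ≤ X.dist b m + X.dist m u := hX.1.dist_triangle
        have h2 : X.dist m u ≤ X.dist m a' + X.dist a' u := hX.1.dist_triangle
        have h3 : X.dist b m = 1 := dist_eq_one_iff_adj.mpr hadj_mb.symm
        omega
      have hmv : X.dist m v = k - 1 := by
        have c4 : X.dist m v = X.dist v m := SimpleGraph.dist_comm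
        omega
      have hrtg : ReflTransGen (EdgeRel X) s(u, v) s(a', m) :=
        ih (k - 1) (by omega) (a := a') (b := m) (by omega) hadj_ma'.symm (by omega) (by omega)
      refine hrtg.tail (Or.inr ?_)
      refine ⟨a', m, b, a, hadj_ma'.symm, hadj_mb, hab.symm, haa', ?_, ?_, ?_, ?_, rfl,
        Sym2.eq_swap⟩
      · intro heq; subst heq; omega
      · intro hadj
        have := dist_eq_one_iff_adj.mpr hadj
        omega
      · intro heq; subst heq; omega
      · intro hadj; exact no_triangle hX haa' hadj_ma'.symm hadj.symm

lemma reach_of_side (hX : MedianGraph X) {u v : V} (huv : X.Adj u v) :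
    ∀ (k : ℕ) {w : V}, X.dist w u = k → X.dist w v = X.dist w u + 1 →
      (X.deleteEdges {f | ReflTransGen (EdgeRel X) s(u, v) f}).Reachable w u := by
  intro k
  induction k using Nat.strong_induction_on with
  | _ k ih =>
    intro w hk hw
    rcases Nat.eq_zero_or_pos k with rfl | hkpos
    · rw [hX.1.dist_eq_zero_iff.mp hk]
    · obtain ⟨w₁, hww₁, hst⟩ := exists_step hX (a := w) (u := u) (by omega)
      have hside := step_side hX huv hww₁ hst hw
      have hd1 : X.dist w w₁ = 1 := dist_eq_one_iff_adj.mpr hww₁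
      have hd2 : X.dist w₁ w = 1 := dist_eq_one_iff_adj.mpr hww₁.symm
      have hds1 : X.dist w w = 0 := SimpleGraph.dist_self
      have hds2 : X.dist w₁ w₁ = 0 := SimpleGraph.dist_self
      have hnot : s(w, w₁) ∉ {f | ReflTransGen (EdgeRel X) s(u, v) f} := by
        intro hmem
        obtain ⟨a, b, hab, heq, hiff⟩ := class_crosses hX huv hmem
        have h1 : X.dist w b = X.dist w a + 1 := (hiff w).mp hw
        have h2 : X.dist w₁ b = X.dist w₁ a + 1 := (hiff w₁).mp hside
        rcases Sym2.eq_iff.mp heq with ⟨ha, hb⟩ | ⟨ha, hb⟩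
        · subst ha; subst hb; omega
        · subst ha; subst hb; omega
      have hadj : (X.deleteEdges {f | ReflTransGen (EdgeRel X) s(u, v) f}).Adj w w₁ :=
        SimpleGraph.deleteEdges_adj.mpr ⟨hww₁, hnot⟩
      exact hadj.reachable.trans (ih (k - 1) (by omega) (w := w₁) (by omega) (by omega))

lemma not_reach_aux (hX : MedianGraph X) {u v : V} (huv : X.Adj u v) :
    ∀ {x y : V} (_ : (X.deleteEdges {f | ReflTransGen (EdgeRel X) s(u, v) f}).Walk x y),
      X.dist x v = X.dist x u + 1 → X.dist y u = X.dist y v + 1 → False := by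
  intro x y p
  induction p with
  | nil => intro h1 h2; omega
  | @cons a c d h p' ih =>
    intro h1 h2
    have hXadj : X.Adj a c := (SimpleGraph.deleteEdges_adj.mp h).1
    rcases adj_dist_cases hX c huv with hz | hz
    · exact ih hz h2
    · exact (SimpleGraph.deleteEdges_adj.mp h).2
        (crossing_rtg hX huv (X.dist a u) rfl hXadj h1 hz)

lemma not_reach_of_opp (hX : MedianGraph X) {u v y : V} (huv : X.Adj u v)
    (hy : X.dist y u = X.dist y v + 1) {x : V} (hx : X.dist x v = X.dist x u + 1) :
    ¬ (X.deleteEdges {f | ReflTransGen (EdgeRel X) s(u, v) f}).Reachable x y :=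
  fun hr => hr.elim fun p => not_reach_aux hX huv p hx hy

lemma sep_iff (hX : MedianGraph X) {u v : V} (huv : X.Adj u v) (x y : V) :
    SeparatesPts X {f | ReflTransGen (EdgeRel X) s(u, v) f} x y ↔
      ¬ (X.dist x v = X.dist x u + 1 ↔ X.dist y v = X.dist y u + 1) := by
  unfold SeparatesPts
  constructor
  · intro hsep hiff
    rcases adj_dist_cases hX x huv with hx | hx
    · have hys := hiff.mp hx
      exact hsep ((reach_of_side hX huv _ rfl hx).trans
        ((reach_of_side hX huv _ rfl hys).symm))
    · have hyn : X.dist y u = X.dist y v + 1 := by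
        rcases adj_dist_cases hX y huv with hy | hy
        · have := hiff.mpr hy; omega
        · exact hy
      rw [show s(u, v) = s(v, u) from Sym2.eq_swap] at hsep
      exact hsep ((reach_of_side hX huv.symm _ rfl hx).trans
        ((reach_of_side hX huv.symm _ rfl hyn).symm))
  · intro hne hreach
    rcases adj_dist_cases hX x huv with hx | hx <;>
      rcases adj_dist_cases hX y huv with hy | hy
    · exact hne (iff_of_true hx hy)
    · exact not_reach_of_opp hX huv hy hx hreach
    · exact not_reach_of_opp hX huv hx hy hreach.symm
    · exact hne (iff_of_false (by omega) (by omega))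

lemma class_eq_of_mem {J : Set (Sym2 V)} (hJ : IsHyperplane X J) {p q : V}
    (hpq : s(p, q) ∈ J) : J = {f | ReflTransGen (EdgeRel X) s(p, q) f} := by
  obtain ⟨e, he, rfl⟩ := hJ
  have hsym : Symmetric (ReflTransGen (EdgeRel X)) :=
    haveI : Std.Symm (EdgeRel X) := ⟨edgeRel_symm (X := X)⟩
    fun a b h => Relation.ReflTransGen.symmetric.symm a b h
  ext f
  exact ⟨fun hf => (hsym hpq).trans hf, fun hf => ReflTransGen.trans hpq hf⟩

lemma sep_iff_of_ne_class {J : Set (Sym2 V)} (hJ : IsHyperplane X J) {x u : V}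
    (hxu : X.Adj x u) (hne : J ≠ {f | ReflTransGen (EdgeRel X) s(x, u) f}) (y : V) :
    (SeparatesPts X J x y ↔ SeparatesPts X J u y) := by
  have hmem : s(x, u) ∉ J := fun hm => hne (class_eq_of_mem hJ hm)
  have hr : (X.deleteEdges J).Reachable x u :=
    (SimpleGraph.deleteEdges_adj.mpr ⟨hxu, hmem⟩).reachable
  unfold SeparatesPts
  exact ⟨fun h1 h2 => h1 (hr.trans h2), fun h1 h2 => h1 (hr.symm.trans h2)⟩

lemma toward_sep (hX : MedianGraph X) {x u y : V} (hxu : X.Adj x u)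
    (hu : X.dist u y + 1 = X.dist x y) :
    SeparatesPts X {f | ReflTransGen (EdgeRel X) s(x, u) f} x y ∧
      ¬ SeparatesPts X {f | ReflTransGen (EdgeRel X) s(x, u) f} u y := by
  have d1 : X.dist x u = 1 := dist_eq_one_iff_adj.mpr hxu
  have d2 : X.dist x x = 0 := SimpleGraph.dist_self
  have d3 : X.dist u u = 0 := SimpleGraph.dist_self
  have d4 : X.dist u x = 1 := dist_eq_one_iff_adj.mpr hxu.symm
  have d5 : X.dist y u ≤ X.dist y x + X.dist x u := hX.1.dist_triangle
  have d6 : X.dist y u = X.dist u y := SimpleGraph.dist_comm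
  have d7 : X.dist y x = X.dist x y := SimpleGraph.dist_comm
  constructor
  · exact (sep_iff hX hxu x y).mpr (by omega)
  · intro hsep
    have := (sep_iff hX hxu u y).mp hsep
    omega

lemma sep_card (hX : MedianGraph X) : ∀ (n : ℕ) (x y : V), X.dist x y = n →
    {J : Set (Sym2 V) | IsHyperplane X J ∧ SeparatesPts X J x y}.Finite ∧
      {J : Set (Sym2 V) | IsHyperplane X J ∧ SeparatesPts X J x y}.ncard = n := by
  intro n
  induction n with
  | zero =>
    intro x y h
    have hxy : x = y := hX.1.dist_eq_zero_iff.mp h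
    subst hxy
    have hempty : {J : Set (Sym2 V) | IsHyperplane X J ∧ SeparatesPts X J x x} = ∅ := by
      ext J
      simp only [Set.mem_setOf_eq, Set.mem_empty_iff_false, iff_false, not_and]
      intro _ hsep
      exact hsep (SimpleGraph.Reachable.refl x)
    rw [hempty]
    simp
  | succ n ih =>
    intro x y h
    obtain ⟨u, hxu, hu⟩ := exists_step hX (a := x) (u := y) (by omega)
    have hdu : X.dist u y = n := by omega
    obtain ⟨hfin, hcard⟩ := ih u y hdu
    obtain ⟨hsep_xy, hnot_sep_uy⟩ := toward_sep hX hxu hu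
    have hCh : IsHyperplane X {f | ReflTransGen (EdgeRel X) s(x, u) f} :=
      ⟨s(x, u), X.mem_edgeSet.mpr hxu, rfl⟩
    have hset : {J : Set (Sym2 V) | IsHyperplane X J ∧ SeparatesPts X J x y} =
        insert {f | ReflTransGen (EdgeRel X) s(x, u) f}
          {J : Set (Sym2 V) | IsHyperplane X J ∧ SeparatesPts X J u y} := by
      ext J
      simp only [Set.mem_setOf_eq, Set.mem_insert_iff]
      constructor
      · rintro ⟨hJ, hsep⟩
        by_cases hne : J = {f | ReflTransGen (EdgeRel X) s(x, u) f}
        · exact Or.inl hne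
        · exact Or.inr ⟨hJ, (sep_iff_of_ne_class hJ hxu hne y).mp hsep⟩
      · rintro (rfl | ⟨hJ, hsep⟩)
        · exact ⟨hCh, hsep_xy⟩
        · have hne : J ≠ {f | ReflTransGen (EdgeRel X) s(x, u) f} := by
            rintro rfl; exact hnot_sep_uy hsep
          exact ⟨hJ, (sep_iff_of_ne_class hJ hxu hne y).mpr hsep⟩
    have hnm : {f | ReflTransGen (EdgeRel X) s(x, u) f} ∉
        {J : Set (Sym2 V) | IsHyperplane X J ∧ SeparatesPts X J u y} :=
      fun hm => hnot_sep_uy hm.2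
    rw [hset]
    exact ⟨hfin.insert _, by rw [Set.ncard_insert_of_notMem hnm hfin, hcard]⟩

/-- The separating hyperplanes not in `𝒥`. -/
def SepN (X : SimpleGraph V) (𝒥 : Set (Set (Sym2 V))) (x y : V) : Set (Set (Sym2 V)) :=
  {J : Set (Sym2 V) | IsHyperplane X J ∧ J ∉ 𝒥 ∧ SeparatesPts X J x y}

lemma sepN_finite (hX : MedianGraph X) (𝒥 : Set (Set (Sym2 V))) (x y : V) :
    (SepN X 𝒥 x y).Finite :=
  (sep_card hX (X.dist x y) x y rfl).1.subset (fun _ hJ => ⟨hJ.1, hJ.2.2⟩)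

lemma reach_of_collapse_eq (h𝒥 : ∀ J ∈ 𝒥, IsHyperplane X J) {J : Set (Sym2 V)}
    (hJ : IsHyperplane X J) (hJn : J ∉ 𝒥) {a b : V}
    (h : Quotient.mk (collapseSetoid X 𝒥) a = Quotient.mk (collapseSetoid X 𝒥) b) :
    (X.deleteEdges J).Reachable a b := by
  have h' : Relation.EqvGen (fun x y => X.Adj x y ∧ ∃ J' ∈ 𝒥, s(x, y) ∈ J') a b :=
    Quotient.exact h
  clear h
  induction h' with
  | rel x y hxy =>
    obtain ⟨hadj, J', hJ'𝒥, hmem⟩ := hxy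
    have hnm : s(x, y) ∉ J := by
      intro hmemJ
      have e1 : J = {f | ReflTransGen (EdgeRel X) s(x, y) f} := class_eq_of_mem hJ hmemJ
      have e2 : J' = {f | ReflTransGen (EdgeRel X) s(x, y) f} :=
        class_eq_of_mem (h𝒥 J' hJ'𝒥) hmem
      exact hJn (e1.trans e2.symm ▸ hJ'𝒥)
    exact (SimpleGraph.deleteEdges_adj.mpr ⟨hadj, hnm⟩).reachable
  | refl x => exact SimpleGraph.Reachable.refl x
  | symm x y _ ih => exact ih.symm
  | trans x y z _ _ ih1 ih2 => exact ih1.trans ih2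

lemma collapse_reachable (hX : MedianGraph X) (𝒥 : Set (Set (Sym2 V))) (a b : V) :
    (CollapseGraph X 𝒥).Reachable (Quotient.mk (collapseSetoid X 𝒥) a)
      (Quotient.mk (collapseSetoid X 𝒥) b) := by
  obtain ⟨p⟩ := hX.1.preconnected a b
  induction p with
  | nil => exact SimpleGraph.Reachable.refl _
  | @cons x c _ hadj p ih =>
    refine SimpleGraph.Reachable.trans ?_ ih
    by_cases hq : Quotient.mk (collapseSetoid X 𝒥) x = Quotient.mk (collapseSetoid X 𝒥) c
    · rw [hq]
    · exact SimpleGraph.Adj.reachable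
        ((SimpleGraph.fromRel_adj _ _ _).mpr ⟨hq, Or.inl ⟨x, c, hadj, rfl, rfl⟩⟩)

lemma collapse_connected (hX : MedianGraph X) (𝒥 : Set (Set (Sym2 V))) :
    (CollapseGraph X 𝒥).Connected := by
  have hne : Nonempty V := hX.1.nonempty
  rw [SimpleGraph.connected_iff]
  refine ⟨fun u v => ?_, ⟨Quotient.mk (collapseSetoid X 𝒥) hne.some⟩⟩
  induction u using Quotient.inductionOn with
  | h a =>
    induction v using Quotient.inductionOn with
    | h b => exact collapse_reachable hX 𝒥 a b

lemma collapse_dist_le (hX : MedianGraph X) {𝒥 : Set (Set (Sym2 V))}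
    (h𝒥 : ∀ J ∈ 𝒥, IsHyperplane X J) : ∀ (n : ℕ) (x y : V), X.dist x y = n →
    (CollapseGraph X 𝒥).dist (Quotient.mk (collapseSetoid X 𝒥) x)
      (Quotient.mk (collapseSetoid X 𝒥) y) ≤ (SepN X 𝒥 x y).ncard := by
  intro n
  induction n with
  | zero =>
    intro x y h
    rw [hX.1.dist_eq_zero_iff.mp h]
    simp [SimpleGraph.dist_self]
  | succ n ih =>
    intro x y h
    obtain ⟨u, hxu, hu⟩ := exists_step hX (a := x) (u := y) (by omega)
    have hdu : X.dist u y = n := by omega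
    obtain ⟨hsep_xy, hnot_sep_uy⟩ := toward_sep hX hxu hu
    have hCh : IsHyperplane X {f | ReflTransGen (EdgeRel X) s(x, u) f} :=
      ⟨s(x, u), X.mem_edgeSet.mpr hxu, rfl⟩
    by_cases hq : Quotient.mk (collapseSetoid X 𝒥) x = Quotient.mk (collapseSetoid X 𝒥) u
    · rw [hq]
      refine le_trans (ih u y hdu) (Set.ncard_le_ncard ?_ (sepN_finite hX 𝒥 x y))
      rintro J ⟨hJ, hJn, hsep⟩
      have hne : J ≠ {f | ReflTransGen (EdgeRel X) s(x, u) f} := by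
        rintro rfl; exact hnot_sep_uy hsep
      exact ⟨hJ, hJn, (sep_iff_of_ne_class hJ hxu hne y).mpr hsep⟩
    · have hCn : {f | ReflTransGen (EdgeRel X) s(x, u) f} ∉ 𝒥 := by
        intro hmem
        exact hq (Quotient.sound (Relation.EqvGen.rel x u
          ⟨hxu, {f | ReflTransGen (EdgeRel X) s(x, u) f}, hmem, ReflTransGen.refl⟩))
      have hset : SepN X 𝒥 x y = insert {f | ReflTransGen (EdgeRel X) s(x, u) f}
          (SepN X 𝒥 u y) := by
        ext J
        simp only [SepN, Set.mem_setOf_eq, Set.mem_insert_iff]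
        constructor
        · rintro ⟨hJ, hJn, hsep⟩
          by_cases hne : J = {f | ReflTransGen (EdgeRel X) s(x, u) f}
          · exact Or.inl hne
          · exact Or.inr ⟨hJ, hJn, (sep_iff_of_ne_class hJ hxu hne y).mp hsep⟩
        · rintro (rfl | ⟨hJ, hJn, hsep⟩)
          · exact ⟨hCh, hCn, hsep_xy⟩
          · have hne : J ≠ {f | ReflTransGen (EdgeRel X) s(x, u) f} := by
              rintro rfl; exact hnot_sep_uy hsep
            exact ⟨hJ, hJn, (sep_iff_of_ne_class hJ hxu hne y).mpr hsep⟩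
      have hnm : {f | ReflTransGen (EdgeRel X) s(x, u) f} ∉ SepN X 𝒥 u y :=
        fun hm => hnot_sep_uy hm.2.2
      have hadj : (CollapseGraph X 𝒥).Adj (Quotient.mk (collapseSetoid X 𝒥) x)
          (Quotient.mk (collapseSetoid X 𝒥) u) :=
        (SimpleGraph.fromRel_adj _ _ _).mpr ⟨hq, Or.inl ⟨x, u, hxu, rfl, rfl⟩⟩
      have htri : (CollapseGraph X 𝒥).dist (Quotient.mk (collapseSetoid X 𝒥) x)
            (Quotient.mk (collapseSetoid X 𝒥) y) ≤
          (CollapseGraph X 𝒥).dist (Quotient.mk (collapseSetoid X 𝒥) x)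
            (Quotient.mk (collapseSetoid X 𝒥) u) +
          (CollapseGraph X 𝒥).dist (Quotient.mk (collapseSetoid X 𝒥) u)
            (Quotient.mk (collapseSetoid X 𝒥) y) :=
        (collapse_connected hX 𝒥).dist_triangle
      have h1 : (CollapseGraph X 𝒥).dist (Quotient.mk (collapseSetoid X 𝒥) x)
          (Quotient.mk (collapseSetoid X 𝒥) u) = 1 := dist_eq_one_iff_adj.mpr hadj
      have h2 := ih u y hdu
      rw [hset, Set.ncard_insert_of_notMem hnm (sepN_finite hX 𝒥 u y)]
      omega

lemma card_le_walk (hX : MedianGraph X) {𝒥 : Set (Set (Sym2 V))}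
    (h𝒥 : ∀ J ∈ 𝒥, IsHyperplane X J) :
    ∀ {u' v' : Quotient (collapseSetoid X 𝒥)} (p : (CollapseGraph X 𝒥).Walk u' v')
      {a b : V}, Quotient.mk (collapseSetoid X 𝒥) a = u' →
      Quotient.mk (collapseSetoid X 𝒥) b = v' → (SepN X 𝒥 a b).ncard ≤ p.length := by
  intro u' v' p
  induction p with
  | nil =>
    intro a b ha hb
    have hempty : SepN X 𝒥 a b = ∅ := by
      ext J
      simp only [SepN, Set.mem_setOf_eq, Set.mem_empty_iff_false, iff_false, not_and]
      intro hJ hJn hsep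
      exact hsep (reach_of_collapse_eq h𝒥 hJ hJn (ha.trans hb.symm))
    simp [hempty]
  | @cons u' m' v' hadj p' ih =>
    intro a b ha hb
    obtain ⟨hne, hrel⟩ := (SimpleGraph.fromRel_adj _ _ _).mp hadj
    obtain ⟨c, d, hcd, hc, hd⟩ : ∃ c d, X.Adj c d ∧
        Quotient.mk (collapseSetoid X 𝒥) c = u' ∧
        Quotient.mk (collapseSetoid X 𝒥) d = m' := by
      rcases hrel with ⟨c, d, hcd, hc, hd⟩ | ⟨c, d, hcd, hc, hd⟩
      · exact ⟨c, d, hcd, hc, hd⟩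
      · exact ⟨d, c, hcd.symm, hd, hc⟩
    have h1 : SepN X 𝒥 a b ⊆ SepN X 𝒥 c d ∪ SepN X 𝒥 d b := by
      rintro J ⟨hJ, hJn, hsep⟩
      have hac : (X.deleteEdges J).Reachable a c :=
        reach_of_collapse_eq h𝒥 hJ hJn (ha.trans hc.symm)
      by_cases h2 : SeparatesPts X J c d
      · exact Or.inl ⟨hJ, hJn, h2⟩
      · refine Or.inr ⟨hJ, hJn, fun hdb => ?_⟩
        unfold SeparatesPts at h2
        exact hsep (hac.trans ((not_not.mp h2).trans hdb))
    have h2 : SepN X 𝒥 c d ⊆ {({f | ReflTransGen (EdgeRel X) s(c, d) f} : Set (Sym2 V))} := by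
      rintro J ⟨hJ, hJn, hsep⟩
      have hmem : s(c, d) ∈ J := by
        by_contra hmem
        exact hsep ((SimpleGraph.deleteEdges_adj.mpr ⟨hcd, hmem⟩).reachable)
      exact class_eq_of_mem hJ hmem
    have hc1 : (SepN X 𝒥 c d).ncard ≤ 1 := by
      refine le_trans (Set.ncard_le_ncard h2 (Set.finite_singleton _)) ?_
      simp
    have hc2 : (SepN X 𝒥 d b).ncard ≤ p'.length := ih hd hb
    have hc3 : (SepN X 𝒥 a b).ncard ≤ (SepN X 𝒥 c d ∪ SepN X 𝒥 d b).ncard :=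
      Set.ncard_le_ncard h1 ((sepN_finite hX 𝒥 c d).union (sepN_finite hX 𝒥 d b))
    have hc4 := Set.ncard_union_le (SepN X 𝒥 c d) (SepN X 𝒥 d b)
    rw [SimpleGraph.Walk.length_cons]
    omega

end MedianCollapse

/-- Distances in a hyperplane-collapse of a median graph count the separating
hyperplanes not in `𝒥`. -/
theorem stmt6 (X : SimpleGraph V) (hX : MedianGraph X)
    (𝒥 : Set (Set (Sym2 V))) (h𝒥 : ∀ J ∈ 𝒥, IsHyperplane X J) (x y : V) :
    (CollapseGraph X 𝒥).dist (Quotient.mk _ x) (Quotient.mk _ y) =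
      {J : Set (Sym2 V) | IsHyperplane X J ∧ J ∉ 𝒥 ∧ SeparatesPts X J x y}.ncard := by
  refine le_antisymm (MedianCollapse.collapse_dist_le hX h𝒥 (X.dist x y) x y rfl) ?_
  obtain ⟨p, hp⟩ := (MedianCollapse.collapse_connected hX 𝒥).exists_walk_length_eq_dist
    (Quotient.mk _ x) (Quotient.mk _ y)
  have h := MedianCollapse.card_le_walk hX h𝒥 p rfl rfl
  rw [hp] at h
  exact h
end

section
/- Let X be a median graph, 𝒥 a non-empty collection of hyperplanes of X, and π : X → X\\𝒥 the canonical projection to the hyperplane-collapse. For every vertex v of X\\𝒥, the preimage π⁻¹(v) induces a proper convex subgraph of X; indeed π⁻¹(v) equals the intersection of all halfspaces of X containing a fixed lift of v that are delimited by hyperplanes in 𝒥. -/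
open SimpleGraph

variable {V : Type*}

/-- The setoid of the projection `π : X → X\\𝒥`: the equivalence relation generated
by contracting every edge whose hyperplane is *not* in `𝒥` (so that two vertices
have the same image iff no hyperplane of `𝒥` separates them). -/
def collapseCompSetoid (X : SimpleGraph V) (𝒥 : Set (Set (Sym2 V))) : Setoid V :=
  Relation.EqvGen.setoid
    (fun x y => X.Adj x y ∧ ∃ J, IsHyperplane X J ∧ J ∉ 𝒥 ∧ s(x, y) ∈ J)

section Stmt8Aux

variable {X : SimpleGraph V}

private lemma adj_dist1 {a b : V} (h : X.Adj a b) : X.dist a b = 1 :=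
  SimpleGraph.dist_eq_one_iff_adj.mpr h

/-- A median graph is "bipartite-like": distances to the two endpoints of an edge
always differ by exactly one. -/
private lemma dist_cases (hX : MedianGraph X) {a b : V} (h : X.Adj a b) (w : V) :
    X.dist w b = X.dist w a + 1 ∨ X.dist w a = X.dist w b + 1 := by
  obtain ⟨m, hm, -⟩ := hX.2 w a b
  obtain ⟨h1, h2, h3⟩ := hm
  rw [InInterval] at h1 h2 h3
  rw [adj_dist1 h] at h2
  rcases Nat.le_one_iff_eq_zero_or_eq_one.mp (Nat.le.intro h2 : X.dist a m ≤ 1) with h0 | h0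
  · have : a = m := (hX.1.dist_eq_zero_iff).mp h0
    subst this
    left; omega
  · have hmb : X.dist m b = 0 := by omega
    have hmb' : m = b := (hX.1.dist_eq_zero_iff).mp hmb
    right
    rw [hmb'] at h1
    have hba : X.dist b a = 1 := by rw [SimpleGraph.dist_comm]; exact adj_dist1 h
    omega

/-- Median graphs satisfy the quadrangle condition. -/
private lemma quad_of_median (hX : MedianGraph X) : QuadCond X := by
  intro o x y z hzx hzy hxy hox hoy
  obtain ⟨m, hm, -⟩ := hX.2 o x y
  obtain ⟨h1, h2, h3⟩ := hm
  rw [InInterval] at h1 h2 h3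
  rw [hxy] at h2
  have hx0 : X.dist x m ≠ 0 := by
    intro h0
    have : x = m := (hX.1.dist_eq_zero_iff).mp h0
    subst this
    omega
  have hy0 : X.dist m y ≠ 0 := by
    intro h0
    have hmy : m = y := (hX.1.dist_eq_zero_iff).mp h0
    rw [hmy] at h1
    have hyx : X.dist y x = X.dist x y := SimpleGraph.dist_comm
    omega
  have hx1 : X.dist x m = 1 := by omega
  have hy1 : X.dist m y = 1 := by omega
  refine ⟨m, ?_, ?_, ?_⟩
  · exact SimpleGraph.dist_eq_one_iff_adj.mp (by rw [SimpleGraph.dist_comm]; exact hx1)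
  · exact SimpleGraph.dist_eq_one_iff_adj.mp hy1
  · omega

/-- The hyperplane of the edge `ab`. -/
private def Hyp (X : SimpleGraph V) (a b : V) : Set (Sym2 V) :=
  {f | Relation.ReflTransGen (EdgeRel X) s(a, b) f}

private lemma edgeRel_symm : Symmetric (EdgeRel X) := by
  rintro e f (⟨a, b, c, hab, hbc, hac, he, hf⟩ | ⟨a, b, c, d, h1, h2, h3, h4, h5, h6, h7, h8, he, hf⟩)
  · exact Or.inl ⟨c, b, a, hbc.symm, hab.symm, hac.symm, by rw [hf, Sym2.eq_swap],
      by rw [he, Sym2.eq_swap]⟩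
  · exact Or.inr ⟨c, d, a, b, h3, h4, h1, h2, h5.symm, fun hca => h6 hca.symm, h7.symm,
      fun hdb => h8 hdb.symm, hf, he⟩

private lemma rtg_symm {e f : Sym2 V} (h : Relation.ReflTransGen (EdgeRel X) e f) :
    Relation.ReflTransGen (EdgeRel X) f e := by
  induction h with
  | refl => exact Relation.ReflTransGen.refl
  | tail _ hstep ih => exact (Relation.ReflTransGen.single (edgeRel_symm hstep)).trans ih

private lemma hyp_repr {J : Set (Sym2 V)} (h : IsHyperplane X J) :
    ∃ a b : V, X.Adj a b ∧ J = Hyp X a b := by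
  obtain ⟨e, he, rfl⟩ := h
  induction e using Sym2.ind with
  | _ a b => exact ⟨a, b, X.mem_edgeSet.mp he, rfl⟩

private lemma hyp_eq_of_mem {J J' : Set (Sym2 V)} (hJ : IsHyperplane X J)
    (hJ' : IsHyperplane X J') {f : Sym2 V} (hf : f ∈ J) (hf' : f ∈ J') : J = J' := by
  obtain ⟨e, -, rfl⟩ := hJ
  obtain ⟨e', -, rfl⟩ := hJ'
  have h1 : Relation.ReflTransGen (EdgeRel X) e f := hf
  have h2 : Relation.ReflTransGen (EdgeRel X) e' f := hf'
  have hee' : Relation.ReflTransGen (EdgeRel X) e e' := h1.trans (rtg_symm h2)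
  ext g
  exact ⟨fun hg => (rtg_symm hee').trans hg, fun hg => hee'.trans hg⟩

private lemma hyp_isHyperplane {a b : V} (hab : X.Adj a b) : IsHyperplane X (Hyp X a b) :=
  ⟨s(a, b), X.mem_edgeSet.mpr hab, rfl⟩

private lemma mem_hyp_self {a b : V} : s(a, b) ∈ Hyp X a b := Relation.ReflTransGen.refl

/-- Key lemma (Djoković): an edge `pq` whose endpoints are separated by the cut of
the edge `ab` (with matching orientation) lies in the hyperplane of `ab`. -/
private lemma key_lemma (hX : MedianGraph X) {a b : V} (hab : X.Adj a b) :
    ∀ n {p q : V}, X.dist p a = n → X.Adj p q → X.dist p b = X.dist p a + 1 →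
      X.dist q a = X.dist q b + 1 → s(p, q) ∈ Hyp X a b := by
  have hc := hX.1
  intro n
  induction n using Nat.strong_induction_on with
  | _ n ih =>
    intro p q hn hpq hp hq
    have hqp1 : X.dist q p = 1 := by rw [SimpleGraph.dist_comm]; exact adj_dist1 hpq
    have hqa_le : X.dist q a ≤ n + 1 := by
      have := hc.dist_triangle (u := q) (v := p) (w := a); omega
    have hqb_ge : X.dist q b ≥ n := by
      have := hc.dist_triangle (u := p) (v := q) (w := b)
      rw [SimpleGraph.dist_comm (u := p) (v := q)] at this
      omega
    have hqb : X.dist q b = n := by omega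
    have hqa : X.dist q a = n + 1 := by omega
    match n, hn with
    | 0, hn =>
      have hpa : p = a := hc.dist_eq_zero_iff.mp hn
      have hqb' : q = b := hc.dist_eq_zero_iff.mp hqb
      subst hpa; subst hqb'
      exact mem_hyp_self
    | (m + 1), hn =>
      -- pick a neighbour p' of p strictly closer to a
      obtain ⟨w0, hw0⟩ := (hc p a).exists_walk_length_eq_dist
      rw [hn] at hw0
      cases w0 with
      | nil => simp at hw0
      | cons hadj rest =>
        rename_i p'
        have hrest : rest.length = m := by simpa using hw0
        have hp'a_le : X.dist p' a ≤ m := hrest ▸ SimpleGraph.dist_le rest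
        have hp'a : X.dist p' a = m := by
          have := hc.dist_triangle (u := p) (v := p') (w := a)
          rw [adj_dist1 hadj] at this
          omega
        have hqp' : X.dist q p' = 2 := by
          have h1 : X.dist q p' ≤ 2 := by
            have := hc.dist_triangle (u := q) (v := p) (w := p')
            rw [hqp1, adj_dist1 hadj] at this
            omega
          have h2 : 2 ≤ X.dist q p' := by
            have := hc.dist_triangle (u := q) (v := p') (w := a)
            omega
          omega
        have hbp' : X.dist b p' = m + 1 := by
          have h1 : X.dist b p' ≤ m + 1 := by
            have := hc.dist_triangle (u := b) (v := a) (w := p')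
            rw [SimpleGraph.dist_comm (u := b) (v := a), adj_dist1 hab, SimpleGraph.dist_comm (u := a) (v := p')] at this
            omega
          have h2 : m + 1 ≤ X.dist b p' := by
            have := hc.dist_triangle (u := b) (v := p') (w := p)
            rw [SimpleGraph.dist_comm (u := p') (v := p), adj_dist1 hadj, SimpleGraph.dist_comm (u := b) (v := p)] at this
            omega
          omega
        -- apply the quadrangle condition at o = b, z = p, x = q, y = p'
        obtain ⟨w, hwq, hwp', hbw⟩ := quad_of_median hX b q p' p hpq hadj hqp'
          (by rw [SimpleGraph.dist_comm (u := b) (v := p), SimpleGraph.dist_comm (u := b) (v := q)]; omega)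
          (by rw [SimpleGraph.dist_comm (u := b) (v := p)]; omega)
        have hbw' : X.dist b w = m := by
          rw [SimpleGraph.dist_comm (u := b) (v := p)] at hbw
          omega
        have hwa : X.dist w a = m + 1 := by
          rcases dist_cases hX hab w with hcase | hcase
          · -- dist w b = dist w a + 1, so dist w a = m - 1, contradicting dist q a
            exfalso
            have h1 : X.dist q a ≤ X.dist q w + X.dist w a := hc.dist_triangle
            have h2 : X.dist q w = 1 := by
              rw [SimpleGraph.dist_comm]; exact adj_dist1 hwq
            rw [SimpleGraph.dist_comm (u := w) (v := b), hbw'] at hcase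
            omega
          · rw [SimpleGraph.dist_comm (u := w) (v := b), hbw'] at hcase
            omega
        -- induction hypothesis applied to the edge p'w
        have hstep : s(p', w) ∈ Hyp X a b := by
          refine ih m (by omega) hp'a hwp'.symm ?_
            (by rw [SimpleGraph.dist_comm (u := w) (v := b)]; omega)
          rw [SimpleGraph.dist_comm (u := p') (v := b)]
          omega
        -- the square p' w q p shows EdgeRel s(p',w) s(q,p)
        have hsq : EdgeRel X s(p', w) s(q, p) := by
          refine Or.inr ⟨p', w, q, p, hwp'.symm, hwq, hpq.symm, hadj, ?_, ?_, ?_, ?_, rfl, rfl⟩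
          · intro h; rw [h] at hqp'; rw [SimpleGraph.dist_comm] at hqp'
            simp [SimpleGraph.dist_self] at hqp'
          · intro h
            have := adj_dist1 h
            rw [SimpleGraph.dist_comm (u := p') (v := q), hqp'] at this
            omega
          · intro h
            rw [h, SimpleGraph.dist_comm (u := b) (v := p)] at hbw'
            omega
          · intro hwp
            have hc1 : X.dist b p = X.dist p b := SimpleGraph.dist_comm
            rcases dist_cases hX hwp b with hcase | hcase <;> omega
        have : s(q, p) ∈ Hyp X a b := Relation.ReflTransGen.tail hstep hsq
        rwa [Sym2.eq_swap] at this

/-- Reachability avoiding the hyperplane of `ab` preserves the side of the cut. -/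
private lemma side_preserved (hX : MedianGraph X) {a b : V} (hab : X.Adj a b) :
    ∀ {p q : V}, (X.deleteEdges (Hyp X a b)).Reachable p q →
      X.dist p a < X.dist p b → X.dist q a < X.dist q b := by
  have walk_ind : ∀ {p q : V} (_ : (X.deleteEdges (Hyp X a b)).Walk p q),
      X.dist p a < X.dist p b → X.dist q a < X.dist q b := by
    intro p q w
    induction w with
    | nil => exact fun h => h
    | cons hadj rest ih =>
      rename_i u v t
      intro hu
      have hadj' : X.Adj u v ∧ s(u, v) ∉ Hyp X a b := by
        simpa using hadj
      apply ih
      rcases dist_cases hX hab v with hcase | hcase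
      · omega
      · exfalso
        have hu' : X.dist u b = X.dist u a + 1 := by
          rcases dist_cases hX hab u with h' | h' <;> omega
        exact hadj'.2 (key_lemma hX hab (X.dist u a) rfl hadj'.1 hu' hcase)
  intro p q hr hp
  obtain ⟨w⟩ := hr
  exact walk_ind w hp

/-- The hyperplane of an edge separates its endpoints. -/
private lemma hyp_separates (hX : MedianGraph X) {a b : V} (hab : X.Adj a b) :
    ¬ (X.deleteEdges (Hyp X a b)).Reachable a b := by
  intro hr
  have := side_preserved hX hab hr
    (by rw [SimpleGraph.dist_self, adj_dist1 hab]; omega)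
  rw [SimpleGraph.dist_comm (u := b) (v := a), adj_dist1 hab, SimpleGraph.dist_self] at this
  omega

end Stmt8Aux

/-- For a non-empty collection `𝒥` of hyperplanes of a median graph, each fibre of
the projection to the collapse is exactly the intersection of the halfspaces
containing the given lift delimited by the hyperplanes of `𝒥`; in particular it is
a proper convex subgraph. -/
theorem stmt8 (X : SimpleGraph V) (hX : MedianGraph X)
    (𝒥 : Set (Set (Sym2 V))) (hne : 𝒥.Nonempty) (h𝒥 : ∀ J ∈ 𝒥, IsHyperplane X J)
    (x : V) :
    ({y : V | (collapseCompSetoid X 𝒥).r x y} =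
        ⋂ J ∈ 𝒥, {y : V | (X.deleteEdges J).Reachable x y}) ∧
      IsConvexSet X {y : V | (collapseCompSetoid X 𝒥).r x y} ∧
      {y : V | (collapseCompSetoid X 𝒥).r x y} ≠ Set.univ := by
  have hc := hX.1
  set r : V → V → Prop :=
    fun u v => X.Adj u v ∧ ∃ J, IsHyperplane X J ∧ J ∉ 𝒥 ∧ s(u, v) ∈ J with hrdef
  have hsr : ∀ u v : V, (collapseCompSetoid X 𝒥).r u v ↔ Relation.EqvGen r u v :=
    fun u v => Iff.rfl
  -- forward direction: related points are not separated by any J ∈ 𝒥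
  have fwd : ∀ {u v : V}, Relation.EqvGen r u v →
      ∀ J ∈ 𝒥, (X.deleteEdges J).Reachable u v := by
    intro u v h
    induction h with
    | rel u v huv =>
      intro J hJ
      obtain ⟨hadj, J', hJ'h, hJ'n, hmem⟩ := huv
      have hnot : s(u, v) ∉ J := fun hin =>
        hJ'n (by rw [← hyp_eq_of_mem (h𝒥 J hJ) hJ'h hin hmem]; exact hJ)
      exact SimpleGraph.Adj.reachable
        (SimpleGraph.deleteEdges_adj.mpr ⟨hadj, hnot⟩)
    | refl u => intro J hJ; exact SimpleGraph.Reachable.refl u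
    | symm u v _ ih => intro J hJ; exact (ih J hJ).symm
    | trans u v w _ _ ih1 ih2 => intro J hJ; exact (ih1 J hJ).trans (ih2 J hJ)
  -- an edge uv pointing away from a point z not separated from u lies on no J ∈ 𝒥
  have edge_gen : ∀ {u v z : V}, X.Adj u v → X.dist z v + 1 = X.dist z u →
      (∀ J ∈ 𝒥, (X.deleteEdges J).Reachable u z) → r u v := by
    intro u v z huv hz hreach
    refine ⟨huv, Hyp X u v, hyp_isHyperplane huv, ?_, mem_hyp_self⟩
    intro hmem𝒥
    have h1 := side_preserved hX huv (hreach _ hmem𝒥)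
      (by rw [SimpleGraph.dist_self, adj_dist1 huv]; omega)
    omega
  have edge_not_mem : ∀ {u v : V}, r u v → ∀ J ∈ 𝒥, s(u, v) ∉ J := by
    rintro u v ⟨hadj, J', hJ'h, hJ'n, hmem⟩ J hJ hin
    exact hJ'n (by rw [← hyp_eq_of_mem (h𝒥 J hJ) hJ'h hin hmem]; exact hJ)
  -- walking along a geodesic towards a non-separated point stays in the class
  have conv_aux : ∀ {u m : V} (w : X.Walk u m), w.length = X.dist u m →
      ∀ z : V, (∀ J ∈ 𝒥, (X.deleteEdges J).Reachable u z) →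
        X.dist u m + X.dist m z = X.dist u z → Relation.EqvGen r u m := by
    intro u m w
    induction w with
    | nil => intro _ _ _ _; exact Relation.EqvGen.refl _
    | @cons u v m hadj rest ih =>
      intro hlen z hreach hbetween
      rw [SimpleGraph.Walk.length_cons] at hlen
      have hduv : X.dist u v = 1 := adj_dist1 hadj
      have hvm_le : X.dist v m ≤ rest.length := SimpleGraph.dist_le rest
      have htri : X.dist u m ≤ X.dist u v + X.dist v m := hc.dist_triangle
      have hvm : X.dist v m = rest.length := by omega
      have hum : X.dist u m = rest.length + 1 := by omega
      have htri2 : X.dist v z ≤ X.dist v m + X.dist m z := hc.dist_triangle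
      have htri3 : X.dist u z ≤ X.dist u v + X.dist v z := hc.dist_triangle
      have hvz : X.dist v z = rest.length + X.dist m z := by omega
      have hzu : X.dist z u = X.dist u z := SimpleGraph.dist_comm
      have hzv : X.dist z v = X.dist v z := SimpleGraph.dist_comm
      have hruv : r u v := edge_gen hadj (by omega) hreach
      have hreach' : ∀ J ∈ 𝒥, (X.deleteEdges J).Reachable v z := by
        intro J hJ
        have hadj' : (X.deleteEdges J).Adj u v :=
          SimpleGraph.deleteEdges_adj.mpr ⟨hadj, edge_not_mem hruv J hJ⟩
        exact hadj'.reachable.symm.trans (hreach J hJ)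
      have hvmEq : Relation.EqvGen r v m := ih hvm.symm z hreach' (by omega)
      exact Relation.EqvGen.trans u v m (Relation.EqvGen.rel u v hruv) hvmEq
  obtain ⟨J₀, hJ₀⟩ := hne
  refine ⟨?_, ?_, ?_⟩
  · ext y
    simp only [Set.mem_setOf_eq, Set.mem_iInter, hsr]
    constructor
    · intro h J hJ; exact fwd h J hJ
    · intro h
      have hreach0 : X.Reachable x y :=
        (h J₀ hJ₀).mono (SimpleGraph.deleteEdges_le _)
      obtain ⟨w, hw⟩ := hreach0.exists_walk_length_eq_dist
      exact conv_aux w hw y h (by rw [SimpleGraph.dist_self]; omega)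
  · intro a ha b hb m hm
    rw [Set.mem_setOf_eq, hsr] at ha hb ⊢
    rw [InInterval] at hm
    have hab : Relation.EqvGen r a b :=
      Relation.EqvGen.trans a x b (Relation.EqvGen.symm x a ha) hb
    obtain ⟨w, hw⟩ := (hc a m).exists_walk_length_eq_dist
    have ham : Relation.EqvGen r a m := conv_aux w hw b (fwd hab) hm
    exact Relation.EqvGen.trans x a m ha ham
  · intro huniv
    obtain ⟨a₀, b₀, hab₀, hJeq⟩ := hyp_repr (h𝒥 J₀ hJ₀)
    have ha₀ : Relation.EqvGen r x a₀ := (hsr x a₀).mp (Set.eq_univ_iff_forall.mp huniv a₀)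
    have hb₀ : Relation.EqvGen r x b₀ := (hsr x b₀).mp (Set.eq_univ_iff_forall.mp huniv b₀)
    have hr : (X.deleteEdges (Hyp X a₀ b₀)).Reachable a₀ b₀ := by
      rw [← hJeq]
      exact ((fwd ha₀ J₀ hJ₀).symm).trans (fwd hb₀ J₀ hJ₀)
    exact hyp_separates hX hab₀ hr
end

section
/- Let G be a group acting on a quasi-median graph X. The action is convex-minimal if and only if every G-orbit of vertices intersects every sector of X. -/
open SimpleGraph

variable {V : Type*}

namespace QMDev

variable {V : Type*} {X : SimpleGraph V}

/-! ### Basic distance utilities -/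

lemma dcomm (X : SimpleGraph V) (u v : V) : X.dist u v = X.dist v u :=
  SimpleGraph.dist_comm

lemma dist_tri (hc : X.Connected) (u v w : V) : X.dist u w ≤ X.dist u v + X.dist v w :=
  hc.dist_triangle

lemma dist_zero (hc : X.Connected) {u v : V} (h : X.dist u v = 0) : u = v :=
  (hc.dist_eq_zero_iff).1 h

lemma adj_dist_le (hc : X.Connected) {u v : V} (h : X.Adj u v) (o : V) :
    X.dist o v ≤ X.dist o u + 1 := by
  have := hc.dist_triangle (u := o) (v := u) (w := v)
  have h1 : X.dist u v = 1 := (dist_eq_one_iff_adj).2 h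
  omega

lemma adj_dist_cases (hc : X.Connected) {u v : V} (h : X.Adj u v) (o : V) :
    X.dist o v = X.dist o u + 1 ∨ X.dist o v = X.dist o u ∨ X.dist o v + 1 = X.dist o u := by
  have h1 := adj_dist_le hc h o
  have h2 := adj_dist_le hc h.symm o
  omega

lemma exists_desc (hc : X.Connected) {o y : V} {n : ℕ} (h : X.dist o y = n + 1) :
    ∃ z, X.Adj z y ∧ X.dist o z = n := by
  obtain ⟨w, hw⟩ := hc.exists_walk_length_eq_dist y o
  rw [dcomm X o y] at h
  cases w with
  | nil => rw [SimpleGraph.dist_self] at h; omega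
  | @cons _ b _ hadj p =>
    refine ⟨b, hadj.symm, ?_⟩
    have h1 : X.dist b o ≤ n := by
      have := dist_le p; simp at hw; omega
    have h2 : X.dist o b ≥ n := by
      have := adj_dist_le hc hadj.symm o
      rw [dcomm X y o] at h; omega
    rw [dcomm X b o] at h1; omega

lemma not_adj_of_dist (hc : X.Connected) {u v : V} {o : V}
    (hu : X.dist o u + 2 ≤ X.dist o v) : ¬ X.Adj u v ∧ u ≠ v := by
  constructor
  · intro h; have := adj_dist_le hc h o; omega
  · rintro rfl; omega

/-! ### Maximal cliques -/

def MaxClique (X : SimpleGraph V) (C : Set V) : Prop :=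
  X.IsClique C ∧ ∀ w, (∀ c ∈ C, w ≠ c → X.Adj w c) → w ∈ C

lemma exists_maxClique {a b : V} (hab : X.Adj a b) :
    ∃ C : Set V, MaxClique X C ∧ a ∈ C ∧ b ∈ C := by
  obtain ⟨M, hsub, hmax⟩ := zorn_subset_nonempty {s : Set V | X.IsClique s}
    (fun c hc hchain _ => ⟨⋃₀ c, by
      intro x hx y hy hne
      obtain ⟨sx, hsx, hxs⟩ := hx; obtain ⟨sy, hsy, hys⟩ := hy
      rcases hchain.total hsx hsy with h | h
      · exact hc hsy (h hxs) hys hne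
      · exact hc hsx hxs (h hys) hne, fun s hs => Set.subset_sUnion_of_mem hs⟩)
    {a, b} (by
      intro x hx y hy hne
      rcases hx with rfl | hx <;> rcases hy with rfl | hy <;>
        first | exact absurd rfl hne | (try simp_all) <;> try exact hab
      exact hab.symm)
  refine ⟨M, ⟨hmax.1, ?_⟩, hsub (by simp), hsub (by simp)⟩
  intro w hw
  have : X.IsClique (insert w M) := by
    intro x hx y hy hne
    rcases hx with rfl | hx <;> rcases hy with rfl | hy
    · exact absurd rfl hne
    · exact hw y hy hne
    · exact (hw x hx (Ne.symm hne)).symm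
    · exact hmax.1 hx hy hne
  have := hmax.2 this (Set.subset_insert w M)
  exact this (Set.mem_insert w M)


/-! ### Gates of maximal cliques -/

section Gate

variable (hc : X.Connected) (htri : TriangleCond X) (hk4 : NoInducedK4minus X)
variable {C : Set V} (hC : MaxClique X C) (hCne : C.Nonempty)

include hc htri hk4 hC hCne in
lemma exists_gate (x : V) :
    ∃ g ∈ C, ∀ c ∈ C, c ≠ g → X.dist x c = X.dist x g + 1 := by
  classical
  set S : Set ℕ := (X.dist x) '' C with hS
  have hSne : S.Nonempty := ⟨X.dist x hCne.choose, hCne.choose, hCne.choose_spec, rfl⟩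
  obtain ⟨g, hgC, hgk⟩ : ∃ g ∈ C, X.dist x g = sInf S := Nat.sInf_mem hSne
  have hmin : ∀ c ∈ C, X.dist x g ≤ X.dist x c := fun c hcC => by
    rw [hgk]; exact Nat.sInf_le ⟨c, hcC, rfl⟩
  -- uniqueness of the minimizer
  have huniq : ∀ c ∈ C, X.dist x c ≤ X.dist x g → c = g := by
    intro c hcC hle
    by_contra hne
    have hadj : X.Adj c g := hC.1 hcC hgC hne
    have heq : X.dist x c = X.dist x g := le_antisymm hle (hmin c hcC)
    rcases Nat.eq_zero_or_pos (X.dist x g) with h0 | hpos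
    · have hxg : x = g := dist_zero hc h0
      have hxc : x = c := dist_zero hc (by omega)
      exact hne (hxc ▸ hxg ▸ rfl)
    · obtain ⟨w, hwc, hwg, hwd⟩ := htri x c g hadj (by omega)
      have hwnotC : w ∉ C := fun hwC => by
        have := hmin w hwC; omega
      have : ∀ c'' ∈ C, w ≠ c'' → X.Adj w c'' := by
        intro c'' hc'' hne''
        by_cases h1 : c'' = c
        · exact h1 ▸ hwc
        by_cases h2 : c'' = g
        · exact h2 ▸ hwg
        by_contra hnadj
        exact hk4 ⟨c, g, w, c'', hadj, hwc.symm, hC.1 hcC hc'' (fun h => h1 h.symm),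
          hwg.symm, hC.1 hgC hc'' (fun h => h2 h.symm), hne'', hnadj⟩
      exact hwnotC (hC.2 w this)
  refine ⟨g, hgC, fun c hcC hne => ?_⟩
  have h1 : X.dist x c ≤ X.dist x g + 1 := by
    have := adj_dist_le hc (hC.1 hgC hcC (fun h => hne h.symm)) x
    exact this
  have h2 : ¬ X.dist x c ≤ X.dist x g := fun hle => hne (huniq c hcC hle)
  omega

end Gate

/-! ### Packaged hypotheses -/

structure QMC (X : SimpleGraph V) (C : Set V) : Prop where
  conn : X.Connected
  tri : TriangleCond X
  quad : QuadCond X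
  k23 : NoInducedK23 X
  k4 : NoInducedK4minus X
  cl : X.IsClique C
  max : ∀ w, (∀ c ∈ C, w ≠ c → X.Adj w c) → w ∈ C
  ne : C.Nonempty

variable {C : Set V}

noncomputable def gate (h : QMC X C) (x : V) : V :=
  (exists_gate h.conn h.tri h.k4 ⟨h.cl, h.max⟩ h.ne x).choose

lemma gate_mem (h : QMC X C) (x : V) : gate h x ∈ C :=
  (exists_gate h.conn h.tri h.k4 ⟨h.cl, h.max⟩ h.ne x).choose_spec.1

lemma gate_spec (h : QMC X C) (x : V) {c : V} (hcC : c ∈ C) (hne : c ≠ gate h x) :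
    X.dist x c = X.dist x (gate h x) + 1 :=
  (exists_gate h.conn h.tri h.k4 ⟨h.cl, h.max⟩ h.ne x).choose_spec.2 c hcC hne

lemma gate_min (h : QMC X C) (x : V) {c : V} (hcC : c ∈ C) :
    X.dist x (gate h x) ≤ X.dist x c := by
  by_cases hne : c = gate h x
  · rw [hne]
  · rw [gate_spec h x hcC hne]; omega

lemma gate_eq (h : QMC X C) {x c : V} (hcC : c ∈ C)
    (hle : X.dist x c ≤ X.dist x (gate h x)) : c = gate h x := by
  by_contra hne
  rw [gate_spec h x hcC hne] at hle; omega

lemma gate_self (h : QMC X C) {c : V} (hcC : c ∈ C) : gate h c = c :=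
  (gate_eq h hcC (by rw [SimpleGraph.dist_self]; omega)).symm

/-- Across an edge whose endpoints have distinct gates, levels agree. -/
lemma level_eq (h : QMC X C) {u v : V} (hadj : X.Adj u v)
    (hne : gate h u ≠ gate h v) :
    X.dist v (gate h v) = X.dist u (gate h u) := by
  have h1 : X.dist u (gate h v) = X.dist u (gate h u) + 1 :=
    gate_spec h u (gate_mem h v) (Ne.symm hne)
  have h2 : X.dist v (gate h u) = X.dist v (gate h v) + 1 :=
    gate_spec h v (gate_mem h u) hne
  have h3 : X.dist u (gate h v) ≤ 1 + X.dist v (gate h v) := by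
    have := dist_tri h.conn u v (gate h v)
    have hd : X.dist u v = 1 := (dist_eq_one_iff_adj).2 hadj
    omega
  have h4 : X.dist v (gate h u) ≤ 1 + X.dist u (gate h u) := by
    have := dist_tri h.conn v u (gate h u)
    have hd : X.dist v u = 1 := (dist_eq_one_iff_adj).2 hadj.symm
    omega
  omega

/-- A neighbour strictly closer to the gate of `y` lies in the same fibre. -/
lemma desc_gate (h : QMC X C) {z y : V} (hadj : X.Adj z y)
    (hlt : X.dist z (gate h y) < X.dist y (gate h y)) : gate h z = gate h y := by
  by_contra hne
  have h1 := level_eq h hadj.symm (fun he => hne he.symm)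
  have h2 := gate_min h z (gate_mem h y)
  omega

/-- In a triangle, if two gates differ then all three gates are pairwise distinct. -/
lemma tri_step_aux (h : QMC X C) {a b c : V} (hab : X.Adj a b) (hbc : X.Adj b c)
    (hac : X.Adj a c) (hne : gate h a ≠ gate h b) (heq : gate h b = gate h c) :
    False := by
  set γ := gate h b with hγ
  have hlev1 : X.dist a (gate h a) = X.dist b γ := (level_eq h hab hne).symm ▸ rfl
  have hlevab := level_eq h hab hne
  have hneac : gate h a ≠ gate h c := heq ▸ hne
  have hlevac := level_eq h hac hneac
  set k := X.dist b γ with hk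
  have hca : X.dist c (gate h c) = k := by rw [hlevac, hlevab]
  have hcγ : X.dist c γ = k := by rw [← heq] at hca; exact hca
  have haγ : X.dist a γ = k + 1 := by
    have := gate_spec h a (gate_mem h b) (Ne.symm hne)
    rw [← hγ] at this; rw [this, hlevab]
  rcases Nat.eq_zero_or_pos k with h0 | hpos
  · have hb : b = γ := dist_zero h.conn (by omega)
    have hcc : c = γ := dist_zero h.conn (by omega)
    exact hbc.ne (hb.trans hcc.symm)
  · obtain ⟨w, hwb, hwc, hwd⟩ := h.tri γ b c hbc (by
      rw [dcomm X γ b, dcomm X γ c, hcγ])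
    rw [dcomm X γ b] at hwd
    have hwγ : X.dist γ w + 1 = k := hwd
    have hna := not_adj_of_dist h.conn (u := w) (v := a) (o := γ)
      (by rw [dcomm X γ a] at *; omega)
    exact h.k4 ⟨b, c, a, w, hbc, hab.symm, hwb.symm, hac.symm, hwc.symm,
      (fun he => hna.2 he.symm), fun hadj => hna.1 hadj.symm⟩

lemma tri_step (h : QMC X C) {a b c : V} (hab : X.Adj a b) (hbc : X.Adj b c)
    (hac : X.Adj a c) (hne : gate h a ≠ gate h b) :
    gate h b ≠ gate h c ∧ gate h a ≠ gate h c := by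
  constructor
  · exact fun heq => tri_step_aux h hab hbc hac hne heq
  · exact fun heq => tri_step_aux h hab.symm hac hbc (Ne.symm hne) heq


lemma dist2 (hc : X.Connected) {u v : V} (h2 : X.dist u v = 2) : ¬ X.Adj u v ∧ u ≠ v := by
  constructor
  · intro hadj; have := (dist_eq_one_iff_adj (G := X)).2 hadj; omega
  · rintro rfl; rw [SimpleGraph.dist_self] at h2; omega

/-- Key distance-two lemma, equal-gates case. -/
lemma X2A (h : QMC X C) : ∀ k : ℕ, ∀ u m v : V, X.Adj u m → X.Adj m v →
    X.dist u v = 2 → gate h u = gate h v → gate h m ≠ gate h u →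
    X.dist u (gate h u) = k → False := by
  intro k
  induction k using Nat.strong_induction_on with
  | _ k IH =>
  intro u m v hum hmv h2 hguv hgm hk
  have hne1 : gate h u ≠ gate h m := fun he => hgm he.symm
  have hne2 : gate h m ≠ gate h v := hguv ▸ hgm
  have E1 : X.dist m (gate h m) = k := by rw [level_eq h hum hne1, hk]
  have E2 : X.dist v (gate h v) = k := by rw [level_eq h hmv hne2, E1]
  have E2' : X.dist v (gate h u) = k := by rw [hguv]; exact E2
  have E3 : X.dist u (gate h m) = k + 1 := by
    rw [gate_spec h u (gate_mem h m) hgm, hk]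
  have E4 : X.dist v (gate h m) = k + 1 := by
    rw [gate_spec h v (gate_mem h m) hne2, E2]
  have E5 : X.dist m (gate h u) = k + 1 := by
    rw [gate_spec h m (gate_mem h u) hne1, E1]
  rcases Nat.eq_zero_or_pos k with h0 | hpos
  · have e1 : u = gate h u := dist_zero h.conn (by omega)
    have e2 : v = gate h u := dist_zero h.conn (by omega)
    exact (dist2 h.conn h2).2 (e1.trans e2.symm)
  obtain ⟨k', rfl⟩ : ∃ k', k = k' + 1 := ⟨k - 1, by omega⟩
  -- descending neighbour of m in the fibre of its gate
  obtain ⟨m₁, hm₁m, hm₁d⟩ := exists_desc h.conn (o := gate h m) (y := m) (n := k')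
    (by rw [dcomm X (gate h m) m]; exact E1)
  have F1 : X.dist m₁ (gate h m) = k' := by rw [dcomm X m₁ (gate h m)]; exact hm₁d
  have hgm₁ : gate h m₁ = gate h m := desc_gate h hm₁m (by omega)
  have F2 : X.dist m₁ (gate h u) = k' + 1 := by
    rw [gate_spec h m₁ (gate_mem h u) (by rw [hgm₁]; exact hne1), hgm₁, F1]
  have hum₁ : X.dist u m₁ = 2 := by
    have hle : X.dist u m₁ ≤ 2 := by
      have t := dist_tri h.conn u m m₁
      have e1 : X.dist m m₁ = 1 := (dist_eq_one_iff_adj).2 hm₁m.symm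
      have e2 : X.dist u m = 1 := (dist_eq_one_iff_adj).2 hum
      omega
    have hge := dist_tri h.conn u m₁ (gate h m)
    omega
  have hvm₁ : X.dist v m₁ = 2 := by
    have hle : X.dist v m₁ ≤ 2 := by
      have t := dist_tri h.conn v m m₁
      have e1 : X.dist m m₁ = 1 := (dist_eq_one_iff_adj).2 hm₁m.symm
      have e2 : X.dist v m = 1 := (dist_eq_one_iff_adj).2 hmv.symm
      omega
    have hge := dist_tri h.conn v m₁ (gate h m)
    omega
  -- first quadrangle: w adjacent to u and m₁
  obtain ⟨w, hwu, hwm₁, hwd⟩ := h.quad (gate h u) u m₁ m hum.symm hm₁m.symm hum₁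
    (by rw [dcomm X (gate h u) m, dcomm X (gate h u) u]; omega)
    (by rw [dcomm X (gate h u) m, dcomm X (gate h u) m₁]; omega)
  have hwα : X.dist w (gate h u) = k' := by
    rw [dcomm X (gate h u) m] at hwd
    rw [dcomm X w (gate h u)]; omega
  have hgw : gate h w = gate h u := desc_gate h hwu (by omega)
  -- second quadrangle: w' adjacent to v and m₁
  obtain ⟨w', hw'v, hw'm₁, hw'd⟩ := h.quad (gate h u) v m₁ m hmv hm₁m.symm hvm₁
    (by rw [dcomm X (gate h u) m, dcomm X (gate h u) v]; omega)
    (by rw [dcomm X (gate h u) m, dcomm X (gate h u) m₁]; omega)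
  have hw'α : X.dist w' (gate h u) = k' := by
    rw [dcomm X (gate h u) m] at hw'd
    rw [dcomm X w' (gate h u)]; omega
  have hgw'v : gate h w' = gate h v := desc_gate h hw'v (by rw [← hguv]; omega)
  have hgw' : gate h w' = gate h u := by rw [hgw'v, hguv]
  by_cases hww' : w = w'
  · -- K23 on (m, w | u, v, m₁)
    subst hww'
    have hmw := not_adj_of_dist h.conn (u := w) (v := m) (o := gate h u)
      (by rw [dcomm X (gate h u) w, dcomm X (gate h u) m]; omega)
    exact h.k23 ⟨m, w, u, v, m₁, fun he => hmw.2 he.symm, (dist2 h.conn h2).2,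
      (dist2 h.conn hvm₁).2, (dist2 h.conn hum₁).2,
      hum.symm, hmv, hm₁m.symm, hwu, hw'v, hwm₁,
      fun hadj => hmw.1 hadj.symm, (dist2 h.conn h2).1, (dist2 h.conn hvm₁).1,
      (dist2 h.conn hum₁).1⟩
  by_cases haww' : X.Adj w w'
  · exact (tri_step h (a := m₁) (b := w) (c := w') hwm₁.symm haww' hw'm₁.symm
      (by rw [hgm₁, hgw]; exact hgm)).1 (by rw [hgw, hgw'])
  · have hww'2 : X.dist w w' = 2 := by
      have hle : X.dist w w' ≤ 2 := by
        have t := dist_tri h.conn w m₁ w'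
        have e1 : X.dist w m₁ = 1 := (dist_eq_one_iff_adj).2 hwm₁
        have e2 : X.dist m₁ w' = 1 := (dist_eq_one_iff_adj).2 hw'm₁.symm
        omega
      rcases Nat.lt_or_ge (X.dist w w') 2 with hlt | hge
      · interval_cases hd : (X.dist w w')
        · exact absurd (dist_zero h.conn hd) hww'
        · exact absurd ((dist_eq_one_iff_adj).1 hd) haww'
      · omega
    exact IH k' (by omega) w m₁ w' hwm₁ hw'm₁.symm hww'2 (by rw [hgw, hgw'])
      (by rw [hgm₁, hgw]; exact hgm) (by rw [hgw]; exact hwα)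


/-- Key distance-two lemma, distinct-gates case. -/
lemma X2B (h : QMC X C) {u m v : V} (hum : X.Adj u m) (hmv : X.Adj m v)
    (h2 : X.dist u v = 2) (huv : gate h u ≠ gate h v)
    (hgmu : gate h m ≠ gate h u) (hgmv : gate h m ≠ gate h v) : False := by
  have E1 : X.dist m (gate h m) = X.dist u (gate h u) := level_eq h hum hgmu.symm
  have E2 : X.dist v (gate h v) = X.dist u (gate h u) := by
    rw [level_eq h hmv hgmv, E1]
  have E3 : X.dist m (gate h u) = X.dist u (gate h u) + 1 := by
    rw [gate_spec h m (gate_mem h u) hgmu.symm, E1]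
  have E4 : X.dist v (gate h u) = X.dist u (gate h u) + 1 := by
    rw [gate_spec h v (gate_mem h u) huv, E2]
  obtain ⟨z, hzm, hzv, hzd⟩ := h.tri (gate h u) m v hmv
    (by rw [dcomm X (gate h u) m, dcomm X (gate h u) v]; omega)
  rw [dcomm X (gate h u) m] at hzd
  have hzα : X.dist z (gate h u) = X.dist u (gate h u) := by
    rw [dcomm X z (gate h u)]; omega
  have hts := tri_step h (a := m) (b := v) (c := z) hmv hzv.symm hzm.symm hgmv
  have hzlev : X.dist z (gate h z) = X.dist u (gate h u) := by
    rw [← level_eq h hzm (fun he => hts.2 he.symm), E1]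
  have hgz : gate h z = gate h u :=
    (gate_eq h (gate_mem h u) (by omega)).symm
  have hzu : z ≠ u := by
    rintro rfl
    exact (dist2 h.conn h2).1 hzv
  have hnadj : ¬ X.Adj u z := by
    intro hadj
    exact (tri_step h (a := m) (b := u) (c := z) hum.symm hadj hzm.symm hgmu).1
      (by rw [hgz])
  have huz : X.dist u z = 2 := by
    have hle : X.dist u z ≤ 2 := by
      have t := dist_tri h.conn u m z
      have e1 : X.dist u m = 1 := (dist_eq_one_iff_adj).2 hum
      have e2 : X.dist m z = 1 := (dist_eq_one_iff_adj).2 hzm.symm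
      omega
    rcases Nat.lt_or_ge (X.dist u z) 2 with hlt | hge
    · interval_cases hd : (X.dist u z)
      · exact absurd (dist_zero h.conn hd) (fun he => hzu he.symm)
      · exact absurd ((dist_eq_one_iff_adj).1 hd) hnadj
    · omega
  exact X2A h (X.dist u (gate h u)) u m z hum hzm.symm huz hgz.symm hgmu rfl

/-- Key distance-two lemma: the gate of a midpoint is one of the endpoint gates. -/
lemma X2 (h : QMC X C) {u m v : V} (hum : X.Adj u m) (hmv : X.Adj m v)
    (h2 : X.dist u v = 2) : gate h m = gate h u ∨ gate h m = gate h v := by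
  by_contra hcon
  push_neg at hcon
  by_cases huv : gate h u = gate h v
  · exact X2A h (X.dist u (gate h u)) u m v hum hmv h2 huv hcon.1 rfl
  · exact X2B h hum hmv h2 huv hcon.1 hcon.2


/-! ### Local-to-global convexity in weakly modular graphs -/

inductive SChain (X : SimpleGraph V) (S : Set V) : V → V → ℕ → Prop
  | refl (x : V) (hx : x ∈ S) : SChain X S x x 0
  | tail {x y z : V} {n : ℕ} (hxy : SChain X S x y n) (h : X.Adj y z ∨ y = z)
      (hz : z ∈ S) : SChain X S x z (n + 1)

lemma SChain.endMem {S : Set V} {x y : V} {n : ℕ} (h : SChain X S x y n) : y ∈ S := by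
  cases h with
  | refl hx => exact hx
  | tail _ _ hz => exact hz

lemma SChain.startMem {S : Set V} {x y : V} {n : ℕ} (h : SChain X S x y n) : x ∈ S := by
  induction h with
  | refl hx => exact hx
  | tail _ _ _ ih => exact ih

/-- Local-to-global: in a weakly modular graph, a chain-connected locally convex set
contains the intervals between its points. -/
lemma LG (hc : X.Connected) (htri : TriangleCond X) (hquad : QuadCond X) {S : Set V}
    (hloc : ∀ x ∈ S, ∀ y ∈ S, X.dist x y = 2 → ∀ m, X.Adj x m → X.Adj m y → m ∈ S) :
    ∀ ℓ : ℕ,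
      (∀ x y z : V, SChain X S x y ℓ → X.Adj z y → X.dist x z + 1 = X.dist x y →
        z ∈ S ∧ ∃ l, SChain X S x z l ∧ l + 1 ≤ ℓ) ∧
      (∀ x y m : V, SChain X S x y ℓ → InInterval X x m y →
        m ∈ S ∧ ∃ l, SChain X S x m l ∧ l + X.dist m y ≤ ℓ) := by
  intro ℓ
  induction ℓ using Nat.strong_induction_on with
  | _ ℓ IH =>
  have dag : ∀ x y z : V, SChain X S x y ℓ → X.Adj z y → X.dist x z + 1 = X.dist x y →
      z ∈ S ∧ ∃ l, SChain X S x z l ∧ l + 1 ≤ ℓ := by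
    intro x y z hchain hzy hdz
    cases hchain with
    | refl hx =>
      rw [SimpleGraph.dist_self] at hdz; omega
    | @tail p _ n hchain' hstep hyS =>
      rcases hstep with hpy | rfl
      · -- the previous chain vertex is adjacent to y
        have hxS : x ∈ S := hchain'.startMem
        have hpS : p ∈ S := hchain'.endMem
        by_cases hzp : z = p
        · exact ⟨hzp ▸ hpS, n, hzp ▸ hchain', by omega⟩
        have hzy1 : X.dist z y = 1 := (dist_eq_one_iff_adj).2 hzy
        have hpy1 : X.dist p y = 1 := (dist_eq_one_iff_adj).2 hpy
        rcases adj_dist_cases hc hpy.symm x with hr | hr | hr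
        · -- r = d + 1 : z lies between x and p
          have hzp2 : X.dist z p = 2 := by
            have hle : X.dist z p ≤ 2 := by
              have t := dist_tri hc z y p
              have hyp1 : X.dist y p = 1 := (dist_eq_one_iff_adj).2 hpy.symm
              omega
            have hge := dist_tri hc x z p
            omega
          have hzIp : InInterval X x z p := by unfold InInterval; omega
          obtain ⟨hzS, lz, hzchain, hlz⟩ := (IH n (by omega)).2 x p z hchain' hzIp
          exact ⟨hzS, lz, hzchain, by omega⟩
        · -- r = d : use the triangle condition to slide p closer
          obtain ⟨t, htp, hty, htd⟩ := htri x p y hpy (by omega)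
          have htIp : InInterval X x t p := by
            unfold InInterval
            have e1 : X.dist t p = 1 := (dist_eq_one_iff_adj).2 htp
            omega
          obtain ⟨htS, lt', htchain, hlt⟩ := (IH n (by omega)).2 x p t hchain' htIp
          have e1 : X.dist t p = 1 := (dist_eq_one_iff_adj).2 htp
          have hnewchain : SChain X S x y (lt' + 1) := htchain.tail (Or.inl hty) hyS
          obtain ⟨hzS, lz, hzchain, hlz⟩ :=
            (IH (lt' + 1) (by omega)).1 x y z hnewchain hzy hdz
          exact ⟨hzS, lz, hzchain, by omega⟩
        · -- r = d − 1 : p is also on a geodesic from x to y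
          by_cases hd1 : X.dist x y = 1
          · have hzx : x = z := dist_zero hc (by omega)
            subst hzx
            exact ⟨hxS, 0, SChain.refl x hxS, by omega⟩
          have hwfin : ∀ w : V, X.Adj w z → X.Adj w p → X.dist x w + 2 = X.dist x y →
              z ∈ S ∧ ∃ l, SChain X S x z l ∧ l + 1 ≤ n + 1 := by
            intro w hwz hwp hwd
            have e1 : X.dist w p = 1 := (dist_eq_one_iff_adj).2 hwp
            have hwIp : InInterval X x w p := by
              unfold InInterval
              omega
            obtain ⟨hwS, lw, hwchain, hlw⟩ := (IH n (by omega)).2 x p w hchain' hwIp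
            have hwy : X.dist w y = 2 := by
              have hle : X.dist w y ≤ 2 := by
                have t := dist_tri hc w z y
                have e2 : X.dist w z = 1 := (dist_eq_one_iff_adj).2 hwz
                omega
              have hge := dist_tri hc x w y
              omega
            have hzS : z ∈ S := hloc w hwS y hyS hwy z hwz hzy
            exact ⟨hzS, lw + 1, hwchain.tail (Or.inl hwz) hzS, by omega⟩
          by_cases hadjzp : X.Adj z p
          · obtain ⟨w, hwz, hwp, hwd⟩ := htri x z p hadjzp (by omega)
            exact hwfin w hwz hwp (by omega)
          · have hzp2 : X.dist z p = 2 := by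
              have hle : X.dist z p ≤ 2 := by
                have t := dist_tri hc z y p
                have hyp1 : X.dist y p = 1 := (dist_eq_one_iff_adj).2 hpy.symm
                omega
              rcases Nat.lt_or_ge (X.dist z p) 2 with hlt | hge
              · interval_cases hd : (X.dist z p)
                · exact absurd (dist_zero hc hd) hzp
                · exact absurd ((dist_eq_one_iff_adj).1 hd) hadjzp
              · omega
            obtain ⟨w, hwz, hwp, hwd⟩ := hquad x z p y hzy.symm hpy.symm hzp2
              (by omega) (by omega)
            exact hwfin w hwz hwp (by omega)
      · -- degenerate step
        obtain ⟨hzS, l, hchain2, hl⟩ := (IH n (by omega)).1 x _ z hchain' hzy hdz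
        exact ⟨hzS, l, hchain2, by omega⟩
  refine ⟨dag, ?_⟩
  intro x y m hchain hm
  unfold InInterval at hm
  by_cases hmy : m = y
  · subst hmy
    exact ⟨hchain.endMem, ℓ, hchain, by rw [SimpleGraph.dist_self]; omega⟩
  · have hmypos : 0 < X.dist m y := by
      have hreach : X.Reachable m y := hc.preconnected m y
      exact hreach.pos_dist_of_ne hmy
    obtain ⟨nn, hnn⟩ : ∃ nn, X.dist m y = nn + 1 := ⟨X.dist m y - 1, by omega⟩
    obtain ⟨z, hzy, hzd⟩ := exists_desc hc (o := m) (y := y) hnn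
    have hzy1 : X.dist z y = 1 := (dist_eq_one_iff_adj).2 hzy
    have hxz : X.dist x z + 1 = X.dist x y := by
      have t1 := dist_tri hc x m z
      have t2 := dist_tri hc x z y
      have hcom : X.dist z m = X.dist m z := dcomm X z m
      omega
    obtain ⟨hzS, lz, hzchain, hlz⟩ := dag x y z hchain hzy hxz
    have hmIz : InInterval X x m z := by
      unfold InInterval
      omega
    obtain ⟨hmS, lm, hmchain, hlm⟩ := (IH lz (by omega)).2 x z m hzchain hmIz
    refine ⟨hmS, lm, hmchain, ?_⟩
    omega


lemma SChain.mono {S T : Set V} (hST : S ⊆ T) {x y : V} {n : ℕ}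
    (h : SChain X S x y n) : SChain X T x y n := by
  induction h with
  | refl hx => exact SChain.refl _ (hST hx)
  | tail _ hstep hz ih => exact ih.tail hstep (hST hz)

lemma SChain.append {S : Set V} {x y z : V} {m n : ℕ}
    (h1 : SChain X S x y m) (h2 : SChain X S y z n) : SChain X S x z (m + n) := by
  induction h2 with
  | refl _ => exact h1
  | tail _ hstep hz ih => exact ih.tail hstep hz

lemma SChain.cons {S : Set V} {x y z : V} {n : ℕ} (hstep : X.Adj x y ∨ x = y)
    (hx : x ∈ S) (h : SChain X S y z n) : SChain X S x z (n + 1) := by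
  induction h with
  | refl hy => exact (SChain.refl x hx).tail hstep hy
  | tail _ hstep' hz ih => exact ih.tail hstep' hz

lemma SChain.reverse {S : Set V} {x y : V} {n : ℕ}
    (h : SChain X S x y n) : SChain X S y x n := by
  induction h with
  | refl hx => exact SChain.refl _ hx
  | @tail _ w _ hxy hstep hz ih =>
    refine SChain.cons ?_ hz ih
    rcases hstep with hadj | rfl
    · exact Or.inl hadj.symm
    · exact Or.inr rfl

/-- Chain from the gate of `x` up to `x`, inside the fibre of `x`. -/
lemma gate_chain (h : QMC X C) (x : V) :
    SChain X {z | gate h z = gate h x} (gate h x) x (X.dist x (gate h x)) := by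
  obtain ⟨k, hk⟩ : ∃ k, X.dist x (gate h x) = k := ⟨_, rfl⟩
  rw [hk]
  induction k using Nat.strong_induction_on generalizing x with
  | _ k IH =>
  rcases Nat.eq_zero_or_pos k with h0 | hpos
  · subst h0
    have hx : gate h x = x := (dist_zero h.conn hk).symm
    rw [hx]
    exact SChain.refl x hx
  obtain ⟨k', rfl⟩ : ∃ k', k = k' + 1 := ⟨k - 1, by omega⟩
  obtain ⟨z, hzx, hzd⟩ := exists_desc h.conn (o := gate h x) (y := x)
    (by rw [dcomm X (gate h x) x]; exact hk)
  have hgz : gate h z = gate h x := desc_gate h hzx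
    (by rw [dcomm X z (gate h x)] at *; omega)
  have hchain := IH k' (by omega) z (by rw [hgz, dcomm X z (gate h x)]; exact hzd)
  have hchain' : SChain X {w | gate h w = gate h x} (gate h x) z k' := by
    have hsub : {w | gate h w = gate h z} ⊆ {w | gate h w = gate h x} := by
      intro w hw; rw [Set.mem_setOf_eq] at *; rw [hw, hgz]
    have := hchain.mono hsub
    rwa [hgz] at this
  exact hchain'.tail (Or.inl hzx) rfl

/-- Unions of one or two fibres are convex. -/
lemma multifiber_convex (h : QMC X C) (α β : V) (hαC : α ∈ C) (hβC : β ∈ C) :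
    IsConvexSet X {z | gate h z = α ∨ gate h z = β} := by
  intro a ha b hb m hm
  set S := {z : V | gate h z = α ∨ gate h z = β} with hS
  have hloc : ∀ x ∈ S, ∀ y ∈ S, X.dist x y = 2 → ∀ m, X.Adj x m → X.Adj m y → m ∈ S := by
    intro x hx y hy hxy2 m' hxm' hm'y
    rcases X2 h hxm' hm'y hxy2 with he | he
    · rcases hx with h1 | h1
      · exact Or.inl (he.trans h1)
      · exact Or.inr (he.trans h1)
    · rcases hy with h1 | h1
      · exact Or.inl (he.trans h1)
      · exact Or.inr (he.trans h1)
  -- build a chain from a to b inside S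
  have hsuba : {z : V | gate h z = gate h a} ⊆ S := by
    intro w hw; rw [Set.mem_setOf_eq] at hw
    rcases ha with h1 | h1
    · exact Or.inl (hw.trans h1)
    · exact Or.inr (hw.trans h1)
  have hsubb : {z : V | gate h z = gate h b} ⊆ S := by
    intro w hw; rw [Set.mem_setOf_eq] at hw
    rcases hb with h1 | h1
    · exact Or.inl (hw.trans h1)
    · exact Or.inr (hw.trans h1)
  have hgaS : gate h a ∈ S := hsuba (by rw [Set.mem_setOf_eq, gate_self h (gate_mem h a)])
  have hgbS : gate h b ∈ S := hsubb (by rw [Set.mem_setOf_eq, gate_self h (gate_mem h b)])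
  have c1 : SChain X S a (gate h a) (X.dist a (gate h a)) :=
    ((gate_chain h a).mono hsuba).reverse
  have cmid : SChain X S (gate h a) (gate h b) 1 := by
    by_cases he : gate h a = gate h b
    · exact (SChain.refl _ hgaS).tail (Or.inr he) (he ▸ hgaS)
    · exact (SChain.refl _ hgaS).tail (Or.inl (h.cl (gate_mem h a) (gate_mem h b) he)) hgbS
  have c2 : SChain X S (gate h b) b (X.dist b (gate h b)) :=
    (gate_chain h b).mono hsubb
  have hchain := (c1.append cmid).append c2
  exact ((LG h.conn h.tri h.quad hloc _).2 a b m hchain hm).1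


/-! ### Hyperplane membership -/

lemma dist_eq_two (hc : X.Connected) {a b c : V} (hab : X.Adj a b) (hbc : X.Adj b c)
    (hne : a ≠ c) (hnadj : ¬ X.Adj a c) : X.dist a c = 2 := by
  have hle : X.dist a c ≤ 2 := by
    have t := dist_tri hc a b c
    have e1 : X.dist a b = 1 := (dist_eq_one_iff_adj).2 hab
    have e2 : X.dist b c = 1 := (dist_eq_one_iff_adj).2 hbc
    omega
  rcases Nat.lt_or_ge (X.dist a c) 2 with hlt | hge
  · interval_cases hd : (X.dist a c)
    · exact absurd (dist_zero hc hd) hne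
    · exact absurd ((dist_eq_one_iff_adj).1 hd) hnadj
  · omega

lemma cliqueRel (h : QMC X C) {x y z : V} (hx : x ∈ C) (hy : y ∈ C) (hz : z ∈ C)
    (hxy : x ≠ y) (hyz : y ≠ z) (hxz : x ≠ z) : EdgeRel X s(x, y) s(y, z) :=
  Or.inl ⟨x, y, z, h.cl hx hy hxy, h.cl hy hz hyz, h.cl hx hz hxz, rfl, rfl⟩

lemma clique_edge_reaches (h : QMC X C) {a₀ b₀ : V} (ha₀ : a₀ ∈ C) (hb₀ : b₀ ∈ C)
    (hne₀ : a₀ ≠ b₀) {x y : V} (hx : x ∈ C) (hy : y ∈ C) (hxy : x ≠ y) :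
    Relation.ReflTransGen (EdgeRel X) s(a₀, b₀) s(x, y) := by
  by_cases hxa : x = a₀
  · subst hxa
    by_cases hyb : y = b₀
    · subst hyb; exact Relation.ReflTransGen.refl
    · have hrel : EdgeRel X s(b₀, x) s(x, y) :=
        cliqueRel h hb₀ hx hy (fun he => hne₀ he.symm) hxy (fun he => hyb he.symm)
      have hswap : (s(x, b₀) : Sym2 V) = s(b₀, x) := Sym2.eq_swap
      rw [hswap]
      exact Relation.ReflTransGen.single hrel
  by_cases hxb : x = b₀
  · subst hxb
    by_cases hya : y = a₀
    · subst hya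
      have hswap : (s(x, y) : Sym2 V) = s(y, x) := Sym2.eq_swap
      rw [hswap]
    · exact Relation.ReflTransGen.single
        (cliqueRel h ha₀ hx hy hne₀ hxy (fun he => hya he.symm))
  · have r1 : Relation.ReflTransGen (EdgeRel X) s(a₀, b₀) s(b₀, x) :=
      Relation.ReflTransGen.single
        (cliqueRel h ha₀ hb₀ hx hne₀ (fun he => hxb he.symm) (fun he => hxa he.symm))
    by_cases hyb : y = b₀
    · subst hyb
      have hswap : (s(x, y) : Sym2 V) = s(y, x) := Sym2.eq_swap
      rw [hswap]
      exact r1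
    · exact r1.tail (cliqueRel h hb₀ hx hy (fun he => hxb he.symm) hxy
        (fun he => hyb he.symm))

/-- Any edge whose endpoints have distinct gates belongs to the hyperplane of the
clique. -/
lemma cross_mem_J (h : QMC X C) {a₀ b₀ : V} (ha₀ : a₀ ∈ C) (hb₀ : b₀ ∈ C)
    (hne₀ : a₀ ≠ b₀) :
    ∀ k : ℕ, ∀ u v : V, X.Adj u v → gate h u ≠ gate h v → X.dist u (gate h u) = k →
      Relation.ReflTransGen (EdgeRel X) s(a₀, b₀) s(u, v) := by
  intro k
  induction k using Nat.strong_induction_on with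
  | _ k IH =>
  intro u v hadj hne hk
  have E1 : X.dist v (gate h v) = k := by rw [level_eq h hadj hne, hk]
  have E3 : X.dist u (gate h v) = k + 1 := by
    rw [gate_spec h u (gate_mem h v) (fun he => hne he.symm), hk]
  have E5 : X.dist v (gate h u) = k + 1 := by
    rw [gate_spec h v (gate_mem h u) hne, E1]
  rcases Nat.eq_zero_or_pos k with h0 | hpos
  · have hu : u = gate h u := dist_zero h.conn (by omega)
    have hv : v = gate h v := dist_zero h.conn (by omega)
    exact clique_edge_reaches h ha₀ hb₀ hne₀ (hu ▸ gate_mem h u) (hv ▸ gate_mem h v)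
      hadj.ne
  obtain ⟨k', rfl⟩ : ∃ k', k = k' + 1 := ⟨k - 1, by omega⟩
  obtain ⟨w₁, hw₁v, hw₁d⟩ := exists_desc h.conn (o := gate h v) (y := v)
    (by rw [dcomm X (gate h v) v]; exact E1)
  have F1 : X.dist w₁ (gate h v) = k' := by rw [dcomm X w₁ (gate h v)]; exact hw₁d
  have hgw₁ : gate h w₁ = gate h v := desc_gate h hw₁v (by omega)
  have F2 : X.dist w₁ (gate h u) = k' + 1 := by
    rw [gate_spec h w₁ (gate_mem h u) (by rw [hgw₁]; exact hne), hgw₁, F1]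
  have huw₁ : X.dist u w₁ = 2 := by
    have hle : X.dist u w₁ ≤ 2 := by
      have t := dist_tri h.conn u v w₁
      have e1 : X.dist u v = 1 := (dist_eq_one_iff_adj).2 hadj
      have e2 : X.dist v w₁ = 1 := (dist_eq_one_iff_adj).2 hw₁v.symm
      omega
    have hge := dist_tri h.conn u w₁ (gate h v)
    omega
  obtain ⟨w, hwu, hww₁, hwd⟩ := h.quad (gate h u) u w₁ v hadj.symm hw₁v.symm huw₁
    (by rw [dcomm X (gate h u) v, dcomm X (gate h u) u]; omega)
    (by rw [dcomm X (gate h u) v, dcomm X (gate h u) w₁]; omega)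
  have hwα : X.dist w (gate h u) = k' := by
    rw [dcomm X (gate h u) v] at hwd
    rw [dcomm X w (gate h u)]; omega
  have hgw : gate h w = gate h u := desc_gate h hwu (by omega)
  have hrec : Relation.ReflTransGen (EdgeRel X) s(a₀, b₀) s(w, w₁) :=
    IH k' (by omega) w w₁ hww₁ (by rw [hgw, hgw₁]; exact hne) (by rw [hgw]; exact hwα)
  have hsq : EdgeRel X s(w₁, w) s(u, v) := by
    have hvw := not_adj_of_dist h.conn (u := w) (v := v) (o := gate h u)
      (by rw [dcomm X (gate h u) w, dcomm X (gate h u) v]; omega)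
    have huw₁' := dist2 h.conn huw₁
    exact Or.inr ⟨w₁, w, u, v, hww₁.symm, hwu, hadj, hw₁v.symm,
      (fun he => huw₁'.2 he.symm), (fun ha => huw₁'.1 ha.symm),
      hvw.2, hvw.1, rfl, rfl⟩
  have hrec' : Relation.ReflTransGen (EdgeRel X) s(a₀, b₀) s(w₁, w) := by
    have hswap : (s(w₁, w) : Sym2 V) = s(w, w₁) := Sym2.eq_swap
    rw [hswap]
    exact hrec
  exact hrec'.tail hsq

/-- Every member of the hyperplane is an edge whose endpoints have distinct gates. -/
lemma J_sub (h : QMC X C) {a₀ b₀ : V} (ha₀ : a₀ ∈ C) (hb₀ : b₀ ∈ C)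
    (hadj₀ : X.Adj a₀ b₀) {f : Sym2 V}
    (hf : Relation.ReflTransGen (EdgeRel X) s(a₀, b₀) f) :
    ∃ u v : V, f = s(u, v) ∧ X.Adj u v ∧ gate h u ≠ gate h v := by
  induction hf with
  | refl =>
    refine ⟨a₀, b₀, rfl, hadj₀, ?_⟩
    rw [gate_self h ha₀, gate_self h hb₀]
    exact hadj₀.ne
  | tail _ hstep ih =>
    obtain ⟨u, v, rfl, huv, hne⟩ := ih
    rcases hstep with ⟨a, b, c, hab, hbc, hac, hg, hf⟩ | ⟨a, b, c, d, hab, hbc, hcd,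
      hda, hneac, hnac, hnebd, hnbd, hg, hf⟩
    · -- triangle
      have hne' : gate h a ≠ gate h b := by
        rcases (Sym2.eq_iff).1 hg with ⟨h1, h2⟩ | ⟨h1, h2⟩
        · rw [← h1, ← h2]; exact hne
        · rw [← h1, ← h2]; exact hne.symm
      exact ⟨b, c, hf, hbc, (tri_step h hab hbc hac hne').1⟩
    · -- square
      have hne' : gate h a ≠ gate h b := by
        rcases (Sym2.eq_iff).1 hg with ⟨h1, h2⟩ | ⟨h1, h2⟩
        · rw [← h1, ← h2]; exact hne
        · rw [← h1, ← h2]; exact hne.symm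
      have hdac : X.dist a c = 2 := dist_eq_two h.conn hab hbc hneac hnac
      have hdbd : X.dist b d = 2 := dist_eq_two h.conn hbc hcd hnebd hnbd
      have h1 := X2 h hab hbc hdac
      have h2 := X2 h hda.symm hcd.symm hdac
      have h3 := X2 h hab.symm hda.symm hdbd
      refine ⟨c, d, hf, hcd, fun hcdg => ?_⟩
      rcases h1 with e1 | e1
      · exact hne' e1.symm
      · rcases h3 with e3 | e3
        · exact hne' e3
        · exact hne' (e3.trans (hcdg.symm.trans e1.symm))


/-! ### Sectors and fibres -/

lemma support_in_interval (hc : X.Connected) {a m : V} (w : X.Walk a m)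
    (hlen : w.length = X.dist a m) {x : V} (hx : x ∈ w.support) :
    InInterval X a x m := by
  classical
  have hsplit := congrArg Walk.length (w.take_spec hx)
  rw [Walk.length_append] at hsplit
  have h1 : X.dist a x ≤ (w.takeUntil x hx).length := dist_le _
  have h2 : X.dist x m ≤ (w.dropUntil x hx).length := dist_le _
  have h3 := dist_tri hc a x m
  unfold InInterval
  omega

variable {G : Type*}

lemma gate_const_of_reach (h : QMC X C) {a₀ b₀ : V} (ha₀ : a₀ ∈ C) (hb₀ : b₀ ∈ C)
    (hne₀ : a₀ ≠ b₀) {u y : V}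
    (hreach : (X.deleteEdges {f | Relation.ReflTransGen (EdgeRel X) s(a₀, b₀) f}).Reachable u y) :
    gate h y = gate h u := by
  obtain ⟨w⟩ := hreach
  induction w with
  | nil => rfl
  | @cons u' b' y' hadj p ih =>
    rw [deleteEdges_adj] at hadj
    have hgb : gate h b' = gate h u' := by
      by_contra hne
      exact hadj.2 (cross_mem_J h ha₀ hb₀ hne₀ (X.dist u' (gate h u')) u' b' hadj.1
        (fun he => hne he.symm) rfl)
    rw [ih, hgb]

lemma fiber_walk_reach (h : QMC X C) {a₀ b₀ : V} (ha₀ : a₀ ∈ C) (hb₀ : b₀ ∈ C)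
    (hadj₀ : X.Adj a₀ b₀) (γ : V) :
    ∀ {a m : V} (w : X.Walk a m), (∀ x ∈ w.support, gate h x = γ) →
    (X.deleteEdges {f | Relation.ReflTransGen (EdgeRel X) s(a₀, b₀) f}).Reachable a m := by
  intro a m w
  induction w with
  | nil => exact fun _ => Reachable.refl _
  | @cons u' b' y' hadj p ih =>
    intro hfib
    have hgu : gate h u' = γ := hfib u' (by simp)
    have hgb : gate h b' = γ := hfib b' (by
      rw [Walk.support_cons]
      exact List.mem_cons_of_mem _ p.start_mem_support)
    have hnJ : s(u', b') ∉ {f | Relation.ReflTransGen (EdgeRel X) s(a₀, b₀) f} := by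
      intro hmem
      obtain ⟨u'', v'', heq, _, hne⟩ := J_sub h ha₀ hb₀ hadj₀ hmem
      rcases (Sym2.eq_iff).1 heq with ⟨e1, e2⟩ | ⟨e1, e2⟩
      · exact hne (by rw [← e1, ← e2, hgu, hgb])
      · exact hne (by rw [← e1, ← e2, hgu, hgb])
    have hstep : (X.deleteEdges {f | Relation.ReflTransGen (EdgeRel X) s(a₀, b₀) f}).Adj u' b' :=
      deleteEdges_adj.mpr ⟨hadj, hnJ⟩
    exact hstep.reachable.trans (ih (fun x hx =>
      hfib x (by rw [Walk.support_cons]; exact List.mem_cons_of_mem _ hx)))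

lemma fiber_reach (h : QMC X C) {a₀ b₀ : V} (ha₀ : a₀ ∈ C) (hb₀ : b₀ ∈ C)
    (hadj₀ : X.Adj a₀ b₀) {a m : V} (hgam : gate h a = gate h m) :
    (X.deleteEdges {f | Relation.ReflTransGen (EdgeRel X) s(a₀, b₀) f}).Reachable a m := by
  obtain ⟨w, hlen⟩ := h.conn.exists_walk_length_eq_dist a m
  have hfib : ∀ x ∈ w.support, gate h x = gate h m := by
    intro x hx
    have hint := support_in_interval h.conn w hlen hx
    have hconv := multifiber_convex h (gate h m) (gate h m) (gate_mem h m) (gate_mem h m)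
      a (Or.inl hgam) m (Or.inl rfl) x hint
    rcases hconv with h1 | h1 <;> exact h1
  exact fiber_walk_reach h ha₀ hb₀ hadj₀ (gate h m) w hfib

/-- The complement of a sector is convex. -/
lemma sector_compl_convex (h : QMC X C) {a₀ b₀ : V} (ha₀ : a₀ ∈ C) (hb₀ : b₀ ∈ C)
    (hadj₀ : X.Adj a₀ b₀) (v₀ : V) :
    IsConvexSet X {w | ¬ (X.deleteEdges
      {f | Relation.ReflTransGen (EdgeRel X) s(a₀, b₀) f}).Reachable v₀ w} := by
  intro a ha b hb m hm hmS
  rw [Set.mem_setOf_eq] at ha hb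
  by_cases hga : gate h a = gate h m
  · exact ha (hmS.trans (fiber_reach h ha₀ hb₀ hadj₀
      (show gate h m = gate h a from hga.symm)))
  by_cases hgb : gate h b = gate h m
  · exact hb (hmS.trans (fiber_reach h ha₀ hb₀ hadj₀
      (show gate h m = gate h b from hgb.symm)))
  · have := multifiber_convex h (gate h a) (gate h b) (gate_mem h a) (gate_mem h b)
      a (Or.inl rfl) b (Or.inr rfl) m hm
    rcases this with h1 | h1
    · exact hga h1.symm
    · exact hgb h1.symm

/-! ### Group actions and convex hulls -/

lemma act_dist_le [Group G] [MulAction G V] (hc : X.Connected)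
    (hact : ∀ (g : G) (a b : V), X.Adj (g • a) (g • b) ↔ X.Adj a b)
    (g : G) (u v : V) : X.dist (g • u) (g • v) ≤ X.dist u v := by
  obtain ⟨w, hlen⟩ := hc.exists_walk_length_eq_dist u v
  let f : X →g X := ⟨fun v => g • v, fun {a b} h => (hact g a b).2 h⟩
  have := dist_le (w.map f)
  rwa [Walk.length_map, hlen] at this

lemma act_dist [Group G] [MulAction G V] (hc : X.Connected)
    (hact : ∀ (g : G) (a b : V), X.Adj (g • a) (g • b) ↔ X.Adj a b)
    (g : G) (u v : V) : X.dist (g • u) (g • v) = X.dist u v := by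
  refine le_antisymm (act_dist_le hc hact g u v) ?_
  have := act_dist_le hc hact g⁻¹ (g • u) (g • v)
  rwa [inv_smul_smul, inv_smul_smul] at this

lemma convHull_convex (X : SimpleGraph V) (A : Set V) : IsConvexSet X (ConvHull X A) := by
  intro a ha b hb m hm
  intro T hT
  exact hT.1 a (ha T hT) b (hb T hT) m hm

lemma subset_convHull (X : SimpleGraph V) (A : Set V) : A ⊆ ConvHull X A := by
  intro a ha T hT
  exact hT.2 ha

lemma convHull_min (X : SimpleGraph V) {A T : Set V} (h1 : IsConvexSet X T)
    (h2 : A ⊆ T) : ConvHull X A ⊆ T :=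
  Set.sInter_subset_of_mem ⟨h1, h2⟩

end QMDev

/-- An action of `G` on a quasi-median graph is convex-minimal iff every orbit of
vertices intersects every sector. -/
theorem stmt16 {G : Type*} [Group G] [MulAction G V] (X : SimpleGraph V)
    (hX : QuasiMedian X)
    (hact : ∀ (g : G) (a b : V), X.Adj (g • a) (g • b) ↔ X.Adj a b) :
    (∀ Y : Set V, Y.Nonempty → (∀ g : G, (fun v => g • v) '' Y = Y) →
        IsConvexSet X Y → Y = Set.univ) ↔
      ∀ (x : V) (J : Set (Sym2 V)) (S : Set V), IsHyperplane X J →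
        IsSectorOf X J S → ∃ g : G, g • x ∈ S := by
  obtain ⟨hconn, htri, hquad, hk23, hk4⟩ := hX
  constructor
  · intro hmin x J S hJ hS
    obtain ⟨e₀, he₀, hJeq⟩ := hJ
    subst hJeq
    obtain ⟨v₀, rfl⟩ := hS
    revert he₀
    induction e₀ using Sym2.ind with
    | _ a₀ b₀ =>
    intro he₀
    have hadj₀ : X.Adj a₀ b₀ := (mem_edgeSet X).1 he₀
    obtain ⟨C, hCmax, ha₀C, hb₀C⟩ := QMDev.exists_maxClique hadj₀
    have h : QMDev.QMC X C := ⟨hconn, htri, hquad, hk23, hk4, hCmax.1, hCmax.2, ⟨a₀, ha₀C⟩⟩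
    by_contra hno
    push_neg at hno
    have hxA : x ∈ Set.range (fun g : G => g • x) := ⟨1, one_smul G x⟩
    have hAY := QMDev.subset_convHull X (Set.range (fun g : G => g • x))
    have hYconv := QMDev.convHull_convex X (Set.range (fun g : G => g • x))
    have key : ∀ g : G, ConvHull X (Set.range (fun g : G => g • x)) ⊆
        (fun v => g • v) '' ConvHull X (Set.range (fun g : G => g • x)) := by
      intro g
      refine QMDev.convHull_min X ?_ ?_
      · intro a' ha' b' hb' m hm
        obtain ⟨a, haY, rfl⟩ := ha'
        obtain ⟨b, hbY, rfl⟩ := hb'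
        have hm' : InInterval X a (g⁻¹ • m) b := by
          unfold InInterval at hm ⊢
          have e1 : X.dist a (g⁻¹ • m) = X.dist (g • a) m := by
            rw [← QMDev.act_dist hconn hact g a (g⁻¹ • m), smul_inv_smul]
          have e2 : X.dist (g⁻¹ • m) b = X.dist m (g • b) := by
            rw [← QMDev.act_dist hconn hact g (g⁻¹ • m) b, smul_inv_smul]
          have e3 : X.dist a b = X.dist (g • a) (g • b) :=
            (QMDev.act_dist hconn hact g a b).symm
          rw [e1, e2, e3]; exact hm
        exact ⟨g⁻¹ • m, hYconv a haY b hbY _ hm', smul_inv_smul g m⟩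
      · rintro w ⟨g', rfl⟩
        refine ⟨(g⁻¹ * g') • x, hAY ⟨g⁻¹ * g', rfl⟩, ?_⟩
        simp only [smul_smul, mul_inv_cancel_left]
    have hYinv : ∀ g : G, (fun v => g • v) '' ConvHull X (Set.range (fun g : G => g • x)) =
        ConvHull X (Set.range (fun g : G => g • x)) := by
      intro g
      apply Set.Subset.antisymm
      · rintro w ⟨y, hy, rfl⟩
        obtain ⟨z, hz, hze⟩ := key g⁻¹ hy
        show g • y ∈ _
        rw [← hze]
        simpa using hz
      · exact key g
    have hYuniv := hmin (ConvHull X (Set.range (fun g : G => g • x)))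
      ⟨x, hAY hxA⟩ hYinv hYconv
    have hsub : ConvHull X (Set.range (fun g : G => g • x)) ⊆
        {w | ¬ (X.deleteEdges
          {f | Relation.ReflTransGen (EdgeRel X) s(a₀, b₀) f}).Reachable v₀ w} :=
      QMDev.convHull_min X (QMDev.sector_compl_convex h ha₀C hb₀C hadj₀ v₀)
        (by rintro w ⟨g', rfl⟩; exact hno g')
    have hv₀ : v₀ ∈ ConvHull X (Set.range (fun g : G => g • x)) := by
      rw [hYuniv]; exact Set.mem_univ v₀
    exact hsub hv₀ (Reachable.refl v₀)
  · intro hsec Y hYne hYinv hYconv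
    by_contra hYuniv
    obtain ⟨y₀, hy₀⟩ := hYne
    obtain ⟨v₁, hv₁⟩ : ∃ v, v ∉ Y := by
      by_contra hall; push_neg at hall
      exact hYuniv (Set.eq_univ_of_forall hall)
    obtain ⟨a, b, hab, haY, hbY⟩ : ∃ a b, X.Adj a b ∧ a ∈ Y ∧ b ∉ Y := by
      have aux : ∀ (u vv : V) (w : X.Walk u vv), u ∈ Y → vv ∉ Y →
          ∃ a b, X.Adj a b ∧ a ∈ Y ∧ b ∉ Y := by
        intro u vv w
        induction w with
        | nil => intro hu hv; exact absurd hu hv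
        | @cons u' c vv' hadj p ih =>
          intro hu hv
          by_cases hcY : c ∈ Y
          · exact ih hcY hv
          · exact ⟨u', c, hadj, hu, hcY⟩
      exact aux y₀ v₁ (hconn.preconnected y₀ v₁).some hy₀ hv₁
    obtain ⟨C, hCmax, haC, hbC⟩ := QMDev.exists_maxClique hab
    have h : QMDev.QMC X C := ⟨hconn, htri, hquad, hk23, hk4, hCmax.1, hCmax.2, ⟨a, haC⟩⟩
    obtain ⟨g, hg⟩ := hsec a {f | Relation.ReflTransGen (EdgeRel X) s(a, b) f}
      {w | (X.deleteEdges {f | Relation.ReflTransGen (EdgeRel X) s(a, b) f}).Reachable b w}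
      ⟨s(a, b), (mem_edgeSet X).2 hab, rfl⟩ ⟨b, rfl⟩
    have hyY : g • a ∈ Y := by
      rw [← hYinv g]; exact ⟨a, haY, rfl⟩
    have hgate : QMDev.gate h (g • a) = b := by
      have h1 := QMDev.gate_const_of_reach h haC hbC hab.ne hg
      rw [h1, QMDev.gate_self h hbC]
    have hint : InInterval X (g • a) b a := by
      unfold InInterval
      have h1 : X.dist (g • a) a = X.dist (g • a) b + 1 := by
        have h2 := QMDev.gate_spec h (g • a) haC (by rw [hgate]; exact hab.ne)
        rw [hgate] at h2; exact h2
      have h2 : X.dist b a = 1 := (dist_eq_one_iff_adj).2 hab.symm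
      omega
    exact hbY (hYconv (g • a) hyY a haY b hint)
end
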